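/- arXiv:0906.0423 — 7 statements merged into one kernel-verified Lean document; each statement's English description precedes it below -/
import Mathlib

section
/- Let 0 < a < b be real numbers and let m be a positive integer with π·m·(b − a) ≥ 2. Then for every natural number M with M ≥ 4·m·(b − a), one has Σ_{l=1}^{M} sin²( 2πm·(a + (b − a)·l/M) ) ≥ M/4. -/
open Real Finset

/-- Lower bound on the sum of squared sines at equispaced sampling points:
for `0 < a < b`, a positive integer `m` with `π m (b-a) ≥ 2`, and a natural number
`M ≥ 4 m (b-a)`, one has `∑_{l=1}^M sin²(2πm(a + (b-a) l / M)) ≥ M/4`. -/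
theorem stmt_5 (a b : ℝ) (ha : 0 < a) (hab : a < b) (m : ℕ) (hm : 0 < m)
    (hπ : Real.pi * m * (b - a) ≥ 2) (M : ℕ)
    (hM : (M : ℝ) ≥ 4 * m * (b - a)) :
    ∑ l ∈ Finset.Icc 1 M,
        Real.sin (2 * Real.pi * m * (a + (b - a) * l / M)) ^ 2 ≥ (M : ℝ) / 4 := by
  have hc : (0:ℝ) < b - a := by linarith
  have hm' : (1:ℝ) ≤ (m:ℝ) := by exact_mod_cast hm
  have hMpos : (0:ℝ) < M := lt_of_lt_of_le (by nlinarith) hM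
  have hMne : (M:ℝ) ≠ 0 := ne_of_gt hMpos
  set φ : ℝ := 4 * Real.pi * m * (b - a) / M with hφdef
  set θ : ℝ := 4 * Real.pi * m * a with hθdef
  have hπpos := Real.pi_pos
  -- bounds on φ/2
  have h1 : 4 / M ≤ φ / 2 := by
    have he : φ/2 = 2*Real.pi*m*(b-a)/M := by rw [hφdef]; ring
    rw [he, div_le_div_iff₀ hMpos hMpos]
    nlinarith [mul_le_mul_of_nonneg_right hπ (le_of_lt hMpos)]
  have h2 : φ / 2 ≤ Real.pi / 2 := by
    rw [hφdef, div_le_div_iff₀ (by norm_num : (0:ℝ) < 2) (by norm_num : (0:ℝ) < 2)]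
    rw [div_mul_eq_mul_div, div_le_iff₀ hMpos]
    nlinarith
  have h3 : 0 < φ / 2 := lt_of_lt_of_le (by positivity) h1
  -- Jordan's inequality
  have hsin : 8 / (Real.pi * M) ≤ Real.sin (φ / 2) := by
    calc 8 / (Real.pi * M) = 2 / Real.pi * (4 / M) := by
          field_simp; ring
      _ ≤ 2 / Real.pi * (φ / 2) := by
          apply mul_le_mul_of_nonneg_left h1; positivity
      _ ≤ Real.sin (φ / 2) := Real.mul_le_sin (le_of_lt h3) h2
  have hsinpos : 0 < Real.sin (φ / 2) :=
    lt_of_lt_of_le (by positivity) hsin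
  -- telescoping identity for the cosine sum
  set S : ℝ := ∑ l ∈ Finset.Icc 1 M, Real.cos (θ + l * φ) with hSdef
  have key : ∀ i : ℕ,
      Real.sin (θ + ((i:ℝ)+1) * φ + φ/2) - Real.sin (θ + (i:ℝ) * φ + φ/2)
        = Real.cos (θ + ((i:ℝ)+1) * φ) * (2 * Real.sin (φ/2)) := by
    intro i
    rw [Real.sin_sub_sin]
    have e1 : (θ + ((i:ℝ)+1) * φ + φ/2 - (θ + (i:ℝ) * φ + φ/2)) / 2 = φ / 2 := by ring
    have e2 : (θ + ((i:ℝ)+1) * φ + φ/2 + (θ + (i:ℝ) * φ + φ/2)) / 2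
        = θ + ((i:ℝ)+1) * φ := by ring
    rw [e1, e2]; ring
  have htel : S * (2 * Real.sin (φ/2))
      = Real.sin (θ + (M:ℝ) * φ + φ/2) - Real.sin (θ + φ/2) := by
    have h0 : S * (2 * Real.sin (φ/2))
        = ∑ i ∈ Finset.range M,
            (Real.sin (θ + ((i:ℝ)+1) * φ + φ/2) - Real.sin (θ + (i:ℝ) * φ + φ/2)) := by
      rw [hSdef, Finset.sum_mul]
      rw [show Finset.Icc 1 M = Finset.Ico 1 (M+1) by rw [Finset.Ico_add_one_right_eq_Icc]]
      rw [Finset.sum_Ico_eq_sum_range]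
      simp only [Nat.add_sub_cancel]
      apply Finset.sum_congr rfl
      intro i _
      rw [key i]
      push_cast
      ring_nf
    have htele := Finset.sum_range_sub (fun i : ℕ => Real.sin (θ + (i:ℝ) * φ + φ/2)) M
    push_cast at htele
    rw [h0, htele]
    norm_num
  -- bound the cosine sum
  have hSle : S ≤ Real.pi * M / 8 := by
    have habs : |S| * (2 * Real.sin (φ/2)) ≤ 2 := by
      rw [← abs_of_pos (show (0:ℝ) < 2 * Real.sin (φ/2) by positivity), ← abs_mul, htel]
      calc |Real.sin (θ + (M:ℝ) * φ + φ/2) - Real.sin (θ + φ/2)|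
          ≤ |Real.sin (θ + (M:ℝ) * φ + φ/2)| + |Real.sin (θ + φ/2)| := abs_sub _ _
        _ ≤ 1 + 1 := add_le_add (Real.abs_sin_le_one _) (Real.abs_sin_le_one _)
        _ = 2 := by norm_num
    have hS1 : |S| ≤ 1 / Real.sin (φ/2) := by
      rw [le_div_iff₀ hsinpos]
      nlinarith [abs_nonneg S]
    have hS2 : 1 / Real.sin (φ/2) ≤ Real.pi * M / 8 := by
      rw [div_le_div_iff₀ hsinpos (by norm_num : (0:ℝ) < 8)]
      have h8 : Real.pi * M * (8 / (Real.pi * M)) = 8 := by field_simp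
      nlinarith [mul_le_mul_of_nonneg_left hsin (le_of_lt (by positivity : (0:ℝ) < Real.pi * M))]
    calc S ≤ |S| := le_abs_self S
      _ ≤ 1 / Real.sin (φ/2) := hS1
      _ ≤ Real.pi * M / 8 := hS2
  -- rewrite the sum of squared sines
  have hsum : ∑ l ∈ Finset.Icc 1 M,
      Real.sin (2 * Real.pi * m * (a + (b - a) * l / M)) ^ 2 = (M:ℝ) / 2 - S / 2 := by
    have hterm : ∀ l ∈ Finset.Icc 1 M,
        Real.sin (2 * Real.pi * m * (a + (b - a) * l / M)) ^ 2
          = 1/2 - Real.cos (θ + (l:ℝ) * φ) / 2 := by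
      intro l _
      rw [Real.sin_sq_eq_half_sub]
      congr 2
      rw [hθdef, hφdef]
      field_simp
      ring
    rw [Finset.sum_congr rfl hterm, Finset.sum_sub_distrib, Finset.sum_const,
      Nat.card_Icc]
    rw [hSdef, ← Finset.sum_div]
    push_cast
    ring
  rw [hsum]
  have hπ4 := Real.pi_le_four
  nlinarith
end

section
/- Let 0 < a < b be real numbers and let γ : [a, b] → ℝ satisfy 0 < γ₁ ≤ γ(u) ≤ γ₂ for all u ∈ [a, b]. For a positive integer m and a positive integer M, set u_l = a + (b − a)·l/M for l = 1, …, M and define τ(m, M) = (1/(4π²m²M)) Σ_{l=1}^{M} γ(u_l)² · sin²(2πm·u_l). Then there exists a constant K > 0 (independent of m and M) such that for all positive integers m, M with π·m·(b − a) ≥ 2 and M ≥ 4·m·(b − a), one has τ(m, M) ≥ K·m^{−2}. -/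
open Real Finset

lemma cos_sum_bound (α φ : ℝ) (M : ℕ) (hφ : 0 < Real.sin (φ / 2)) :
    |∑ l ∈ Finset.Icc 1 M, Real.cos (α + l * φ)| ≤ 1 / Real.sin (φ / 2) := by
  set g : ℕ → ℝ := fun i => Real.sin (α + i * φ + φ / 2) with hg
  have key : ∀ i : ℕ, g (i + 1) - g i
      = 2 * Real.sin (φ / 2) * Real.cos (α + (i + 1 : ℕ) * φ) := by
    intro i
    have := Real.sin_sub_sin (α + (i + 1 : ℕ) * φ + φ / 2) (α + i * φ + φ / 2)
    simp only [hg]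
    rw [this]
    push_cast
    ring_nf
  have hsum : 2 * Real.sin (φ / 2) * ∑ l ∈ Finset.Icc 1 M, Real.cos (α + l * φ)
      = g M - g 0 := by
    rw [Finset.mul_sum, ← Finset.sum_range_sub g M, ← Finset.Ico_add_one_right_eq_Icc,
      Finset.sum_Ico_eq_sum_range]
    refine Finset.sum_congr rfl fun i _ => ?_
    rw [key i]
    push_cast
    ring_nf
  have h2 : |g M - g 0| ≤ 2 := by
    calc |g M - g 0| ≤ |g M| + |g 0| := abs_sub (g M) (g 0)
    _ ≤ 1 + 1 := add_le_add (Real.abs_sin_le_one _) (Real.abs_sin_le_one _)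
    _ = 2 := by norm_num
  have h3 : 2 * Real.sin (φ / 2) * |∑ l ∈ Finset.Icc 1 M, Real.cos (α + l * φ)| ≤ 2 := by
    rw [← abs_of_pos (by positivity : (0:ℝ) < 2 * Real.sin (φ / 2)), ← abs_mul, hsum]
    exact h2
  rw [le_div_iff₀ hφ]
  nlinarith [abs_nonneg (∑ l ∈ Finset.Icc 1 M, Real.cos (α + l * φ))]

set_option maxHeartbeats 800000 in
/-- Discrete variance bound for a boxcar-like blurring function: with equispaced
sampling points `u_l = a + (b-a) l / M` and a bounded weight `γ`, the quantity
`τ(m,M) = (1/(4π²m²M)) ∑_{l=1}^M γ(u_l)² sin²(2πm u_l)` satisfies `τ(m,M) ≥ K m⁻²`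
for some `K > 0` independent of `m` and `M`, whenever `π m (b-a) ≥ 2` and
`M ≥ 4 m (b-a)`. -/
theorem stmt_6 (a b : ℝ) (ha : 0 < a) (hab : a < b) (γ : ℝ → ℝ) (γ₁ γ₂ : ℝ)
    (hγ₁ : 0 < γ₁) (hγ : ∀ u ∈ Set.Icc a b, γ₁ ≤ γ u ∧ γ u ≤ γ₂) :
    ∃ K > (0:ℝ), ∀ m M : ℕ, 0 < m → 0 < M →
      Real.pi * m * (b - a) ≥ 2 → (M : ℝ) ≥ 4 * m * (b - a) →
      (1 / (4 * Real.pi ^ 2 * (m : ℝ) ^ 2 * M)) *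
          ∑ l ∈ Finset.Icc 1 M, γ (a + (b - a) * l / M) ^ 2 *
            Real.sin (2 * Real.pi * m * (a + (b - a) * l / M)) ^ 2
        ≥ K / (m : ℝ) ^ 2 := by
  have hπ : 0 < Real.pi := Real.pi_pos
  have hπ4 : Real.pi < 3.15 := Real.pi_lt_d2
  have hK : 0 < γ₁^2 * (8 - Real.pi) / (64 * Real.pi^2) := by
    apply div_pos (mul_pos (by positivity) (by nlinarith)) (by positivity)
  refine ⟨γ₁^2 * (8 - Real.pi) / (64 * Real.pi^2), hK, ?_⟩
  intro m M hm hM hπm hMm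
  have hmpos : (0:ℝ) < m := by exact_mod_cast hm
  have hMpos : (0:ℝ) < M := by exact_mod_cast hM
  have hMne : (M:ℝ) ≠ 0 := ne_of_gt hMpos
  have hba : (0:ℝ) < b - a := sub_pos.mpr hab
  set φ : ℝ := 4 * Real.pi * m * (b - a) / M with hφdef
  set α : ℝ := 4 * Real.pi * m * a with hαdef
  have hφpos : 0 < φ := by positivity
  have hφle : φ ≤ Real.pi := by
    rw [hφdef, div_le_iff₀ hMpos]
    nlinarith
  -- sine lower bound
  have hsin : φ / Real.pi ≤ Real.sin (φ / 2) := by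
    have := Real.mul_le_sin (x := φ / 2) (by positivity) (by linarith)
    calc φ / Real.pi = 2 / Real.pi * (φ / 2) := by ring
    _ ≤ Real.sin (φ / 2) := this
  have hsinpos : 0 < Real.sin (φ / 2) := lt_of_lt_of_le (by positivity) hsin
  -- bound the cosine sum
  set C : ℝ := ∑ l ∈ Finset.Icc 1 M, Real.cos (α + l * φ) with hCdef
  have hC : |C| ≤ Real.pi * M / 8 := by
    calc |C| ≤ 1 / Real.sin (φ / 2) := cos_sum_bound α φ M hsinpos
    _ ≤ Real.pi / φ := by
        rw [div_le_div_iff₀ hsinpos hφpos]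
        have := (div_le_iff₀ hπ).mp hsin
        nlinarith
    _ ≤ Real.pi * M / 8 := by
        rw [div_le_div_iff₀ hφpos (by norm_num : (0:ℝ) < 8)]
        rw [hφdef]
        have : Real.pi * (m:ℝ) * (b - a) ≥ 2 := hπm
        have h1 : Real.pi * ↑M * (4 * Real.pi * ↑m * (b - a) / ↑M)
            = 4 * Real.pi * (Real.pi * ↑m * (b - a)) := by field_simp
        rw [h1]
        nlinarith
  -- each summand lower bound
  have hterm : ∀ l ∈ Finset.Icc 1 M,
      γ₁^2 * (1/2 - Real.cos (α + l * φ) / 2)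
        ≤ γ (a + (b - a) * l / M) ^ 2 *
            Real.sin (2 * Real.pi * m * (a + (b - a) * l / M)) ^ 2 := by
    intro l hl
    obtain ⟨hl1, hl2⟩ := Finset.mem_Icc.mp hl
    have hl1' : (1:ℝ) ≤ l := by exact_mod_cast hl1
    have hl2' : (l:ℝ) ≤ M := by exact_mod_cast hl2
    have hx : a + (b - a) * l / M ∈ Set.Icc a b := by
      constructor
      · have : 0 ≤ (b - a) * l / M := by positivity
        linarith
      · have : (b - a) * l / M ≤ b - a := by
          rw [div_le_iff₀ hMpos]
          nlinarith
        linarith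
    obtain ⟨hg1, _⟩ := hγ _ hx
    have hγsq : γ₁^2 ≤ γ (a + (b - a) * l / M) ^ 2 := by nlinarith
    have hsinid : Real.sin (2 * Real.pi * m * (a + (b - a) * l / M)) ^ 2
        = 1/2 - Real.cos (α + l * φ) / 2 := by
      have harg : α + l * φ = 2 * (2 * Real.pi * m * (a + (b - a) * l / M)) := by
        rw [hαdef, hφdef]; field_simp; ring
      rw [harg]
      have h1 := Real.cos_sq (2 * Real.pi * m * (a + (b - a) * l / M))
      have h2 := Real.sin_sq_add_cos_sq (2 * Real.pi * m * (a + (b - a) * l / M))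
      linarith
    rw [hsinid]
    have hnn : (0:ℝ) ≤ 1/2 - Real.cos (α + l * φ) / 2 := by
      have := Real.cos_le_one (α + l * φ)
      linarith
    exact mul_le_mul_of_nonneg_right hγsq hnn
  -- sum lower bound
  have hSsum : γ₁^2 * ((M:ℝ)/2 - C/2)
      ≤ ∑ l ∈ Finset.Icc 1 M, γ (a + (b - a) * l / M) ^ 2 *
            Real.sin (2 * Real.pi * m * (a + (b - a) * l / M)) ^ 2 := by
    have h1 : ∑ l ∈ Finset.Icc 1 M, γ₁^2 * (1/2 - Real.cos (α + l * φ) / 2)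
        = γ₁^2 * ((M:ℝ)/2 - C/2) := by
      rw [hCdef, ← Finset.mul_sum, Finset.sum_sub_distrib, Finset.sum_const,
        Nat.card_Icc, Finset.sum_div, ← Finset.sum_div]
      simp only [nsmul_eq_mul, Nat.add_sub_cancel]
      ring
    rw [← h1]
    exact Finset.sum_le_sum hterm
  have hSsum2 : γ₁^2 * ((M:ℝ)/2 - Real.pi * M / 16)
      ≤ ∑ l ∈ Finset.Icc 1 M, γ (a + (b - a) * l / M) ^ 2 *
            Real.sin (2 * Real.pi * m * (a + (b - a) * l / M)) ^ 2 := by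
    refine le_trans ?_ hSsum
    nlinarith [(abs_le.mp hC).2, sq_nonneg γ₁]
  have hkey : (1 / (4 * Real.pi ^ 2 * (m : ℝ) ^ 2 * M)) *
      (γ₁^2 * ((M:ℝ)/2 - Real.pi * M / 16))
      = γ₁^2 * (8 - Real.pi) / (64 * Real.pi^2) / (m:ℝ)^2 := by
    field_simp
    ring
  calc (1 / (4 * Real.pi ^ 2 * (m : ℝ) ^ 2 * M)) *
          ∑ l ∈ Finset.Icc 1 M, γ (a + (b - a) * l / M) ^ 2 *
            Real.sin (2 * Real.pi * m * (a + (b - a) * l / M)) ^ 2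
      ≥ (1 / (4 * Real.pi ^ 2 * (m : ℝ) ^ 2 * M)) *
          (γ₁^2 * ((M:ℝ)/2 - Real.pi * M / 16)) := by
        apply mul_le_mul_of_nonneg_left hSsum2 (by positivity)
    _ = γ₁^2 * (8 - Real.pi) / (64 * Real.pi^2) / (m:ℝ)^2 := hkey
end

section
/- Let 0 < a < b and α > 0 be real numbers. Then there exist constants C₁ > 0, C₂ > 0 and a real number m₀ ≥ 2 such that for every real m ≥ m₀, C₁·m^{−b}·(ln m)^{−1}·exp(−α·m^{a}) ≤ ∫_a^b exp(−α·m^{u}) du ≤ C₂·m^{−a}·(ln m)^{−1}·exp(−α·m^{a}). -/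
open Real intervalIntegral

private lemma hder_aux (m α : ℝ) (hm : 0 < m) (u : ℝ) :
    HasDerivAt (fun u => -Real.exp (-α * m ^ u))
      (α * Real.log m * (m ^ u * Real.exp (-α * m ^ u))) u := by
  have h1 : HasDerivAt (fun u : ℝ => Real.log m * u) (Real.log m) u := by
    simpa using (hasDerivAt_id u).const_mul (Real.log m)
  have h3 := ((h1.exp.const_mul (-α)).exp).neg
  simp only [Real.rpow_def_of_pos hm]
  exact h3.congr_deriv (by ring)

private lemma cont_rpow (m : ℝ) (hm : 0 < m) : Continuous fun u : ℝ => m ^ u := by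
  have : Continuous fun u : ℝ => Real.exp (Real.log m * u) :=
    Real.continuous_exp.comp (continuous_const.mul continuous_id)
  simpa [Real.rpow_def_of_pos hm] using this

/-- Two-sided Laplace-type bound:
`C₁ m^{-b} (ln m)⁻¹ e^{-α m^a} ≤ ∫_a^b e^{-α m^u} du ≤ C₂ m^{-a} (ln m)⁻¹ e^{-α m^a}`
for all sufficiently large real `m`, where `0 < a < b` and `α > 0`. -/
theorem stmt_9 (a b α : ℝ) (ha : 0 < a) (hab : a < b) (hα : 0 < α) :
    ∃ C₁ > (0:ℝ), ∃ C₂ > (0:ℝ), ∃ m₀ : ℝ, 2 ≤ m₀ ∧ ∀ m : ℝ, m₀ ≤ m →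
      C₁ * m ^ (-b) * (Real.log m)⁻¹ * Real.exp (-α * m ^ a) ≤
          (∫ u in a..b, Real.exp (-α * m ^ u)) ∧
      (∫ u in a..b, Real.exp (-α * m ^ u)) ≤
          C₂ * m ^ (-a) * (Real.log m)⁻¹ * Real.exp (-α * m ^ a) := by
  have hba : 0 < b - a := by linarith
  have hlog2 : 0 < Real.log 2 := Real.log_pos (by norm_num)
  refine ⟨(2*α)⁻¹, by positivity, α⁻¹, by positivity,
    max 2 ((1 + Real.log 2 / α) ^ (b-a)⁻¹), le_max_left _ _, ?_⟩
  intro m hm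
  have hm2 : (2:ℝ) ≤ m := le_trans (le_max_left _ _) hm
  have hm1 : (1:ℝ) < m := by linarith
  have hm0 : (0:ℝ) < m := by linarith
  have hL : 0 < Real.log m := Real.log_pos hm1
  -- gap bound
  have hK : (1 + Real.log 2 / α) ^ ((b-a)⁻¹) ≤ m := le_trans (le_max_right _ _) hm
  have h0K : (0:ℝ) ≤ 1 + Real.log 2 / α := by positivity
  have h1 : 1 + Real.log 2 / α ≤ m ^ (b - a) := by
    calc 1 + Real.log 2 / α = ((1 + Real.log 2 / α) ^ (b-a)⁻¹) ^ (b - a) := by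
          rw [Real.rpow_inv_rpow h0K hba.ne']
      _ ≤ m ^ (b - a) := Real.rpow_le_rpow (Real.rpow_nonneg h0K _) hK hba.le
  have hma1 : (1:ℝ) ≤ m ^ a := Real.one_le_rpow hm1.le ha.le
  have hmab : m ^ a * m ^ (b - a) = m ^ b := by
    rw [← Real.rpow_add hm0]; ring_nf
  have hmba1 : (1:ℝ) ≤ m ^ (b - a) := by
    have : (0:ℝ) ≤ Real.log 2 / α := by positivity
    linarith
  have hgap : Real.log 2 / α ≤ m ^ b - m ^ a := by
    nlinarith [mul_nonneg (sub_nonneg.mpr hma1) (sub_nonneg.mpr hmba1)]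
  have hhalf : Real.exp (-α * m ^ b) ≤ Real.exp (-α * m ^ a) / 2 := by
    have h2 : Real.exp (-α * m ^ b) = Real.exp (-α * m ^ a) * Real.exp (-(α * (m^b - m^a))) := by
      rw [← Real.exp_add]; ring_nf
    have h3 : Real.exp (-(α * (m^b - m^a))) ≤ Real.exp (-(Real.log 2)) := by
      apply Real.exp_le_exp.mpr
      have := (div_le_iff₀ hα).mp hgap
      nlinarith
    have h4 : Real.exp (-(Real.log 2)) = 1/2 := by
      rw [Real.exp_neg, Real.exp_log]; norm_num; norm_num
    calc Real.exp (-α * m ^ b) ≤ Real.exp (-α * m ^ a) * (1/2) := by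
          rw [h2, ← h4]; exact mul_le_mul_of_nonneg_left h3 (Real.exp_nonneg _)
      _ = Real.exp (-α * m ^ a) / 2 := by ring
  -- continuity / integrability
  have hc : Continuous fun u : ℝ => m ^ u := cont_rpow m hm0
  have hce : Continuous fun u : ℝ => Real.exp (-α * m ^ u) :=
    Real.continuous_exp.comp (continuous_const.mul hc)
  have hcg : Continuous fun u : ℝ => m ^ u * Real.exp (-α * m ^ u) := hc.mul hce
  -- exact integral of m^u e^{-α m^u}
  set L := Real.log m with hLdef
  set Ea := Real.exp (-α * m ^ a) with hEa
  set Eb := Real.exp (-α * m ^ b) with hEb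
  have hEa0 : 0 < Ea := Real.exp_pos _
  have hEb0 : 0 < Eb := Real.exp_pos _
  have hInt : ∫ u in a..b, α * L * (m ^ u * Real.exp (-α * m ^ u)) = Ea - Eb := by
    rw [intervalIntegral.integral_eq_sub_of_hasDerivAt
      (fun u _ => hder_aux m α hm0 u)
      (((continuous_const.mul hcg)).intervalIntegrable a b)]
    simp only [hEa, hEb, neg_mul]; ring
  set I := ∫ u in a..b, m ^ u * Real.exp (-α * m ^ u) with hI
  have hIval : α * L * I = Ea - Eb := by
    rw [hI, ← intervalIntegral.integral_const_mul]; exact hInt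
  have hαL : 0 < α * L := by positivity
  -- pointwise bounds
  have hlowpt : ∀ u ∈ Set.Icc a b, m ^ (-b) * (m ^ u * Real.exp (-α * m ^ u)) ≤ Real.exp (-α * m ^ u) := by
    intro u hu
    have h5 : m ^ (-b) * m ^ u = m ^ (u - b) := by rw [← Real.rpow_add hm0]; ring_nf
    have h6 : m ^ (u - b) ≤ 1 := Real.rpow_le_one_of_one_le_of_nonpos hm1.le (by linarith [hu.2])
    calc m ^ (-b) * (m ^ u * Real.exp (-α * m ^ u)) = (m ^ (u-b)) * Real.exp (-α * m ^ u) := by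
          rw [← h5]; ring
      _ ≤ 1 * Real.exp (-α * m ^ u) := mul_le_mul_of_nonneg_right h6 (Real.exp_nonneg _)
      _ = Real.exp (-α * m ^ u) := one_mul _
  have huppt : ∀ u ∈ Set.Icc a b, Real.exp (-α * m ^ u) ≤ m ^ (-a) * (m ^ u * Real.exp (-α * m ^ u)) := by
    intro u hu
    have h5 : m ^ (-a) * m ^ u = m ^ (u - a) := by rw [← Real.rpow_add hm0]; ring_nf
    have h6 : (1:ℝ) ≤ m ^ (u - a) := Real.one_le_rpow hm1.le (by linarith [hu.1])
    calc Real.exp (-α * m ^ u) = 1 * Real.exp (-α * m ^ u) := (one_mul _).symm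
      _ ≤ (m ^ (u-a)) * Real.exp (-α * m ^ u) := mul_le_mul_of_nonneg_right h6 (Real.exp_nonneg _)
      _ = m ^ (-a) * (m ^ u * Real.exp (-α * m ^ u)) := by rw [← h5]; ring
  -- integral bounds
  have hlowI : m ^ (-b) * I ≤ ∫ u in a..b, Real.exp (-α * m ^ u) := by
    rw [hI, ← intervalIntegral.integral_const_mul]
    exact intervalIntegral.integral_mono_on hab.le
      ((continuous_const.mul hcg).intervalIntegrable a b)
      (hce.intervalIntegrable a b) hlowpt
  have huppI : (∫ u in a..b, Real.exp (-α * m ^ u)) ≤ m ^ (-a) * I := by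
    rw [hI, ← intervalIntegral.integral_const_mul]
    exact intervalIntegral.integral_mono_on hab.le
      (hce.intervalIntegrable a b)
      ((continuous_const.mul hcg).intervalIntegrable a b) huppt
  have hIeq : I = (Ea - Eb) / (α * L) := by
    field_simp at hIval ⊢; linarith [hIval]
  constructor
  · refine le_trans ?_ hlowI
    have hmb0 : (0:ℝ) ≤ m ^ (-b) := Real.rpow_nonneg hm0.le _
    rw [hIeq]
    rw [show (2*α)⁻¹ * m ^ (-b) * L⁻¹ * Ea = m ^ (-b) * ((Ea/2) / (α * L)) by
      field_simp]
    have h7 : Ea / 2 ≤ Ea - Eb := by linarith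
    gcongr
  · refine le_trans huppI ?_
    have hma0 : (0:ℝ) ≤ m ^ (-a) := Real.rpow_nonneg hm0.le _
    rw [hIeq]
    rw [show α⁻¹ * m ^ (-a) * L⁻¹ * Ea = m ^ (-a) * (Ea / (α * L)) by field_simp]
    have h7 : Ea - Eb ≤ Ea := by linarith
    gcongr
end

section
/- Let a < b be real numbers and let ν, α, β : [a, b] → ℝ be continuous functions with ν₁ ≤ ν(u) ≤ ν₂, 0 < α₁ ≤ α(u) ≤ α₂ for all u, and with β continuously differentiable on [a, b] and attaining its minimum value β₁ = β(u*) > 0 at some point u* ∈ [a, b]. Then there exists a real number m₀ such that for every real m ≥ m₀, e^{−1}·m^{−(2ν₂ + β₁ + 1)}·exp(−α₂·m^{β₁}) ≤ ∫_a^b m^{−2ν(u)}·exp(−α(u)·m^{β(u)}) du ≤ (b − a)·m^{−2ν₁}·exp(−α₁·m^{β₁}). -/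
open Real Filter Set intervalIntegral

/-- `e^x - 1 ≤ x e^x`. -/
lemma exp_sub_one_le_mul_exp (x : ℝ) : Real.exp x - 1 ≤ x * Real.exp x := by
  have h := Real.add_one_le_exp (-x)
  have hp := Real.exp_pos x
  have h2 : Real.exp x * (-x + 1) ≤ Real.exp x * Real.exp (-x) :=
    mul_le_mul_of_nonneg_left h hp.le
  rw [← Real.exp_add, add_neg_cancel, Real.exp_zero] at h2
  nlinarith

/-- Two-sided Laplace-type bound for `∫_a^b m^{-2ν(u)} e^{-α(u) m^{β(u)}} du` when
`ν, α` are continuous with `ν₁ ≤ ν ≤ ν₂`, `0 < α₁ ≤ α ≤ α₂`, and `β` is continuously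
differentiable, attaining its minimum value `β₁ = β(u*) > 0` at `u* ∈ [a,b]`:
for all sufficiently large real `m`,
`e⁻¹ m^{-(2ν₂+β₁+1)} e^{-α₂ m^{β₁}} ≤ ∫ ≤ (b-a) m^{-2ν₁} e^{-α₁ m^{β₁}}`. -/
theorem stmt_11 (a b : ℝ) (hab : a < b) (ν α β β' : ℝ → ℝ)
    (ν₁ ν₂ α₁ α₂ β₁ ustar : ℝ) (hustar : ustar ∈ Set.Icc a b)
    (hνcont : ContinuousOn ν (Set.Icc a b)) (hαcont : ContinuousOn α (Set.Icc a b))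
    (hν : ∀ u ∈ Set.Icc a b, ν₁ ≤ ν u ∧ ν u ≤ ν₂)
    (hα₁ : 0 < α₁) (hα : ∀ u ∈ Set.Icc a b, α₁ ≤ α u ∧ α u ≤ α₂)
    (hβderiv : ∀ u ∈ Set.Icc a b, HasDerivAt β (β' u) u)
    (hβ'cont : ContinuousOn β' (Set.Icc a b))
    (hβmin : ∀ u ∈ Set.Icc a b, β₁ ≤ β u)
    (hβustar : β ustar = β₁) (hβ₁ : 0 < β₁) :
    ∃ m₀ : ℝ, ∀ m : ℝ, m₀ ≤ m →
      Real.exp (-1) * m ^ (-(2 * ν₂ + β₁ + 1)) * Real.exp (-α₂ * m ^ β₁) ≤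
          (∫ u in a..b, m ^ (-(2 * ν u)) * Real.exp (-(α u) * m ^ (β u))) ∧
      (∫ u in a..b, m ^ (-(2 * ν u)) * Real.exp (-(α u) * m ^ (β u))) ≤
          (b - a) * m ^ (-(2 * ν₁)) * Real.exp (-α₁ * m ^ β₁) := by
  have hα₂pos : 0 < α₂ := hα₁.trans_le ((hα ustar hustar).1.trans (hα ustar hustar).2)
  -- Lipschitz bound on β
  obtain ⟨C, hC⟩ := isCompact_Icc.exists_bound_of_continuousOn hβ'cont
  set L : ℝ := |C| + 1 with hLdef
  have hL0 : 0 < L := by positivity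
  have hLip : ∀ u ∈ Set.Icc a b, β u ≤ β₁ + L * |u - ustar| := by
    intro u hu
    have h := (convex_Icc a b).norm_image_sub_le_of_norm_hasDerivWithin_le
      (fun x hx => (hβderiv x hx).hasDerivWithinAt)
      (fun x hx => (hC x hx).trans (show C ≤ |C| + 1 by linarith [le_abs_self C]))
      hustar hu
    rw [hβustar, Real.norm_eq_abs, Real.norm_eq_abs] at h
    have h' := (le_abs_self (β u - β₁)).trans h
    rw [hLdef]
    linarith
  -- continuity of β
  have hβcont : ContinuousOn β (Set.Icc a b) :=
    fun x hx => ((hβderiv x hx).continuousAt).continuousWithinAt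
  -- eventual conditions
  have E1 : ∀ᶠ m : ℝ in atTop, (1 : ℝ) ≤ m := eventually_ge_atTop 1
  have hβ₁1 : (0 : ℝ) < β₁ + 1 := by linarith
  have Tδ : Tendsto (fun m : ℝ => m ^ (-(β₁ + 1))) atTop (nhds 0) :=
    tendsto_rpow_neg_atTop hβ₁1
  have E2 : ∀ᶠ m : ℝ in atTop, m ^ (-(β₁ + 1)) < (b - a) / 2 :=
    Tδ.eventually_lt_const (by linarith)
  have Tlog : Tendsto (fun m : ℝ => L * (Real.log m / m ^ (β₁ + 1))) atTop (nhds 0) := by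
    have := (isLittleO_log_rpow_atTop hβ₁1).tendsto_div_nhds_zero
    simpa using this.const_mul L
  have E3 : ∀ᶠ m : ℝ in atTop, L * (Real.log m / m ^ (β₁ + 1)) < 1 :=
    Tlog.eventually_lt_const one_pos
  have Tlog1 : Tendsto (fun m : ℝ => α₂ * L * Real.exp 1 * (Real.log m / m ^ (1 : ℝ)))
      atTop (nhds 0) := by
    have := (isLittleO_log_rpow_atTop one_pos).tendsto_div_nhds_zero
    simpa using this.const_mul (α₂ * L * Real.exp 1)
  have E4 : ∀ᶠ m : ℝ in atTop, α₂ * L * Real.exp 1 * (Real.log m / m ^ (1 : ℝ)) < 1 :=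
    Tlog1.eventually_lt_const one_pos
  have Emain := ((E1.and E2).and (E3.and E4))
  rw [eventually_atTop] at Emain
  obtain ⟨m₀, hm₀⟩ := Emain
  refine ⟨m₀, fun m hm => ?_⟩
  obtain ⟨⟨hm1, hδb⟩, h3, h4⟩ := hm₀ m hm
  have m0 : (0 : ℝ) < m := lt_of_lt_of_le one_pos hm1
  have hlog0 : 0 ≤ Real.log m := Real.log_nonneg hm1
  set δ : ℝ := m ^ (-(β₁ + 1)) with hδdef
  have hδ0 : 0 < δ := Real.rpow_pos_of_pos m0 _
  -- the integrand
  set f : ℝ → ℝ := fun u => m ^ (-(2 * ν u)) * Real.exp (-(α u) * m ^ (β u)) with hfdef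
  have hfpos : ∀ u, 0 < f u := fun u =>
    mul_pos (Real.rpow_pos_of_pos m0 _) (Real.exp_pos _)
  have hcont : ContinuousOn f (Set.Icc a b) := by
    apply ContinuousOn.mul
    · exact ContinuousOn.rpow continuousOn_const ((continuousOn_const.mul hνcont).neg)
        (fun x _ => Or.inl m0.ne')
    · exact Real.continuous_exp.comp_continuousOn
        ((hαcont.neg).mul (ContinuousOn.rpow continuousOn_const hβcont
          (fun x _ => Or.inl m0.ne')))
  have hInt : IntervalIntegrable f MeasureTheory.volume a b :=
    (hcont.mono (by rw [Set.uIcc_of_le hab.le])).intervalIntegrable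
  constructor
  · -- lower bound
    -- choose the subinterval
    set c : ℝ := if ustar + δ ≤ b then ustar else b - δ with hcdef
    have hc1 : a ≤ c := by
      rw [hcdef]; split_ifs with h
      · exact hustar.1
      · linarith
    have hc2 : c + δ ≤ b := by
      rw [hcdef]; split_ifs with h
      · exact h
      · linarith
    have hc3 : ∀ u ∈ Set.Icc c (c + δ), |u - ustar| ≤ δ := by
      intro u hu
      rw [abs_sub_le_iff]
      rw [hcdef] at hu
      split_ifs at hu with h
      · constructor <;> [linarith [hu.2]; linarith [hu.1]]
      · push_neg at h
        constructor
        · linarith [hu.2, hustar.1, hustar.2]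
        · linarith [hu.1, hustar.2]
    set K : ℝ := m ^ (-(2 * ν₂)) * (Real.exp (-1) * Real.exp (-α₂ * m ^ β₁)) with hKdef
    have hKf : ∀ u ∈ Set.Icc c (c + δ), K ≤ f u := by
      intro u hu
      have huab : u ∈ Set.Icc a b := ⟨hc1.trans hu.1, hu.2.trans hc2⟩
      have h1 : m ^ (-(2 * ν₂)) ≤ m ^ (-(2 * ν u)) :=
        Real.rpow_le_rpow_of_exponent_le hm1 (by linarith [(hν u huab).2])
      -- exponent estimate
      have hβu : β u ≤ β₁ + L * δ := by
        have := hLip u huab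
        have h2 := mul_le_mul_of_nonneg_left (hc3 u hu) hL0.le
        linarith
      set x : ℝ := Real.log m * (L * δ) with hxdef
      have hxval : x = L * (Real.log m / m ^ (β₁ + 1)) := by
        rw [hxdef, hδdef, Real.rpow_neg m0.le]
        field_simp
      have hx0 : 0 ≤ x := by
        rw [hxdef]; positivity
      have hx1 : x ≤ 1 := by rw [hxval]; exact h3.le
      have hmLδ : m ^ (L * δ) = Real.exp x := by
        rw [Real.rpow_def_of_pos m0, hxdef]
      have hmβu : m ^ β u ≤ m ^ β₁ * Real.exp x := by
        calc m ^ β u ≤ m ^ (β₁ + L * δ) := Real.rpow_le_rpow_of_exponent_le hm1 hβu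
          _ = m ^ β₁ * m ^ (L * δ) := Real.rpow_add m0 _ _
          _ = m ^ β₁ * Real.exp x := by rw [hmLδ]
      have hmβ₁pos : (0 : ℝ) < m ^ β₁ := Real.rpow_pos_of_pos m0 _
      have hexm1 : Real.exp x - 1 ≤ x * Real.exp 1 := by
        have h5 := exp_sub_one_le_mul_exp x
        have h6 : Real.exp x ≤ Real.exp 1 := Real.exp_le_exp.2 hx1
        nlinarith [Real.exp_pos x]
      have hkey : α₂ * (m ^ β₁ * (Real.exp x - 1)) ≤ 1 := by
        have hmd : m ^ β₁ * δ = m⁻¹ := by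
          rw [hδdef, ← Real.rpow_add m0, ← Real.rpow_neg_one m]
          norm_num
        have hδlog : m ^ β₁ * x = L * (Real.log m / m) := by
          rw [hxdef]
          calc m ^ β₁ * (Real.log m * (L * δ)) = L * Real.log m * (m ^ β₁ * δ) := by ring
            _ = L * (Real.log m / m) := by rw [hmd]; ring
        have h4' : α₂ * L * Real.exp 1 * (Real.log m / m) < 1 := by
          rwa [Real.rpow_one] at h4
        have e1pos : (0 : ℝ) < Real.exp 1 := Real.exp_pos 1
        have step : m ^ β₁ * (Real.exp x - 1) ≤ L * (Real.log m / m) * Real.exp 1 := by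
          calc m ^ β₁ * (Real.exp x - 1) ≤ m ^ β₁ * (x * Real.exp 1) :=
                mul_le_mul_of_nonneg_left hexm1 hmβ₁pos.le
            _ = (m ^ β₁ * x) * Real.exp 1 := by ring
            _ = L * (Real.log m / m) * Real.exp 1 := by rw [hδlog]
        calc α₂ * (m ^ β₁ * (Real.exp x - 1))
            ≤ α₂ * (L * (Real.log m / m) * Real.exp 1) :=
              mul_le_mul_of_nonneg_left step hα₂pos.le
          _ = α₂ * L * Real.exp 1 * (Real.log m / m) := by ring
          _ ≤ 1 := h4'.le
      have hαu : α u * m ^ β u ≤ α₂ * m ^ β₁ + 1 := by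
        have hαu2 : α u ≤ α₂ := (hα u huab).2
        have hαu0 : 0 ≤ α u := le_of_lt (hα₁.trans_le (hα u huab).1)
        have hmu0 : 0 ≤ m ^ β u := (Real.rpow_pos_of_pos m0 _).le
        calc α u * m ^ β u ≤ α₂ * m ^ β u := mul_le_mul_of_nonneg_right hαu2 hmu0
          _ ≤ α₂ * (m ^ β₁ * Real.exp x) := mul_le_mul_of_nonneg_left hmβu hα₂pos.le
          _ = α₂ * m ^ β₁ + α₂ * (m ^ β₁ * (Real.exp x - 1)) := by ring
          _ ≤ α₂ * m ^ β₁ + 1 := by linarith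
      have h2 : Real.exp (-1) * Real.exp (-α₂ * m ^ β₁) ≤ Real.exp (-(α u) * m ^ β u) := by
        rw [← Real.exp_add, Real.exp_le_exp]
        linarith [hαu]
      exact mul_le_mul h1 h2 (by positivity) (Real.rpow_nonneg m0.le _)
    have hcc : c ≤ c + δ := by linarith
    have hIntSub : IntervalIntegrable f MeasureTheory.volume c (c + δ) :=
      hInt.mono_set (by
        rw [Set.uIcc_of_le hcc, Set.uIcc_of_le hab.le]
        exact Set.Icc_subset_Icc hc1 hc2)
    have hchain : δ * K ≤ ∫ u in a..b, f u := by
      have hA : δ * K = ∫ _ in c..(c + δ), K := by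
        rw [intervalIntegral.integral_const, smul_eq_mul]
        ring
      have hB : (∫ _ in c..(c + δ), K) ≤ ∫ u in c..(c + δ), f u :=
        intervalIntegral.integral_mono_on hcc intervalIntegrable_const hIntSub hKf
      have hCc : (∫ u in c..(c + δ), f u) ≤ ∫ u in a..b, f u :=
        intervalIntegral.integral_mono_interval hc1 hcc hc2
          (Filter.Eventually.of_forall fun u => (hfpos u).le) hInt
      linarith [hA ▸ hB]
    have hEq : Real.exp (-1) * m ^ (-(2 * ν₂ + β₁ + 1)) * Real.exp (-α₂ * m ^ β₁)
        = δ * K := by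
      rw [hKdef, hδdef]
      have hexp : (-(2 * ν₂ + β₁ + 1)) = (-(β₁ + 1)) + (-(2 * ν₂)) := by ring
      rw [hexp, Real.rpow_add m0]
      ring
    rw [hEq]
    exact hchain
  · -- upper bound
    have hpt : ∀ u ∈ Set.Icc a b,
        f u ≤ m ^ (-(2 * ν₁)) * Real.exp (-α₁ * m ^ β₁) := by
      intro u hu
      have h1 : m ^ (-(2 * ν u)) ≤ m ^ (-(2 * ν₁)) :=
        Real.rpow_le_rpow_of_exponent_le hm1 (by linarith [(hν u hu).1])
      have h2 : Real.exp (-(α u) * m ^ β u) ≤ Real.exp (-α₁ * m ^ β₁) := by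
        rw [Real.exp_le_exp]
        have hm' : m ^ β₁ ≤ m ^ β u :=
          Real.rpow_le_rpow_of_exponent_le hm1 (hβmin u hu)
        have hα1u : α₁ ≤ α u := (hα u hu).1
        nlinarith [Real.rpow_pos_of_pos m0 β₁, Real.rpow_pos_of_pos m0 (β u)]
      exact mul_le_mul h1 h2 (Real.exp_pos _).le (Real.rpow_nonneg m0.le _)
    calc (∫ u in a..b, f u)
        ≤ ∫ _ in a..b, m ^ (-(2 * ν₁)) * Real.exp (-α₁ * m ^ β₁) :=
          intervalIntegral.integral_mono_on hab.le hInt intervalIntegrable_const hpt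
      _ = (b - a) * m ^ (-(2 * ν₁)) * Real.exp (-α₁ * m ^ β₁) := by
          rw [intervalIntegral.integral_const, smul_eq_mul]; ring
end

section
/- Let a < b be real numbers, let k ≥ 1 be an integer, and let ν : [a, b] → ℝ be k-times continuously differentiable, attaining its minimum over [a, b] at a unique point u* ∈ [a, b], with ν^{(s)}(u*) = 0 for s = 1, …, k−1 and ν^{(k)}(u*) ≠ 0. Then there exist constants C₁ > 0, C₂ > 0 and a real number m₀ ≥ 2 such that for every real m ≥ m₀, C₁·m^{−2ν(u*)}·(ln m)^{−1/k} ≤ ∫_a^b m^{−2ν(u)} du ≤ C₂·m^{−2ν(u*)}·(ln m)^{−1/k}. -/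
open Set

/-- MVT chain step: if `|f'| ≤ C|x-x₀|^j` on convex `s`, then `|f y - f x₀| ≤ C|y-x₀|^(j+1)`. -/
lemma chain_step {s : Set ℝ} (hs : Convex ℝ s) {f f' : ℝ → ℝ} {x₀ : ℝ} (hx₀ : x₀ ∈ s)
    (hf : ∀ x ∈ s, HasDerivWithinAt f (f' x) s x) {C : ℝ} (hC : 0 ≤ C) {j : ℕ}
    (hbound : ∀ x ∈ s, |f' x| ≤ C * |x - x₀| ^ j) :
    ∀ y ∈ s, |f y - f x₀| ≤ C * |y - x₀| ^ (j + 1) := by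
  intro y hy
  have hsub : Set.uIcc x₀ y ⊆ s := hs.ordConnected.uIcc_subset hx₀ hy
  have key := (convex_uIcc x₀ y).norm_image_sub_le_of_norm_hasDerivWithin_le
    (C := C * |y - x₀| ^ j) (f := f) (f' := f')
    (fun x hx => (hf x (hsub hx)).mono hsub)
    (fun x hx => by
      refine le_trans (hbound x (hsub hx)) ?_
      have h1 : |x - x₀| ≤ |y - x₀| := by
        rw [Set.uIcc_eq_union] at hx
        rcases hx with hx | hx <;> rw [abs_sub_le_iff] <;>
          constructor <;> cases' hx with h1 h2 <;> nlinarith [abs_nonneg (y - x₀),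
            le_abs_self (y - x₀), neg_abs_le (y - x₀)]
      exact mul_le_mul_of_nonneg_left (pow_le_pow_left₀ (abs_nonneg _) h1 j) hC)
    Set.left_mem_uIcc Set.right_mem_uIcc
  calc |f y - f x₀| ≤ C * |y - x₀| ^ j * ‖y - x₀‖ := key
    _ = C * |y - x₀| ^ (j + 1) := by rw [Real.norm_eq_abs, pow_succ]; ring

/-- Global upper bound: `|ν u - ν x₀| ≤ C |u-x₀|^k` when derivatives `1..k-1` vanish at `x₀`. -/
lemma taylor_upper (a b : ℝ) (hab : a < b) (k : ℕ) (hk : 1 ≤ k) (ν : ℝ → ℝ)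
    (hν : ContDiffOn ℝ k ν (Set.Icc a b)) (x₀ : ℝ) (hx₀ : x₀ ∈ Set.Icc a b)
    (hders : ∀ s : ℕ, 1 ≤ s → s ≤ k - 1 → iteratedDerivWithin s ν (Set.Icc a b) x₀ = 0) :
    ∃ C > (0:ℝ), ∀ u ∈ Set.Icc a b, |ν u - ν x₀| ≤ C * |u - x₀| ^ k := by
  set g : ℕ → ℝ → ℝ := fun s => iteratedDerivWithin s ν (Set.Icc a b) with hg
  have hud : UniqueDiffOn ℝ (Set.Icc a b) := uniqueDiffOn_Icc hab
  have hcont : ContinuousOn (g k) (Set.Icc a b) :=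
    hν.continuousOn_iteratedDerivWithin le_rfl hud
  obtain ⟨C₀, hC₀⟩ := (isCompact_Icc).exists_bound_of_continuousOn hcont
  set C : ℝ := max C₀ 1 with hC
  have hCpos : (0:ℝ) < C := lt_of_lt_of_le one_pos (le_max_right _ _)
  -- derivative transfer: ∀ s < k, HasDerivWithinAt (g s) (g (s+1) x) (Icc a b) x
  have hder : ∀ s : ℕ, s < k → ∀ x ∈ Set.Icc a b,
      HasDerivWithinAt (g s) (g (s + 1) x) (Set.Icc a b) x := by
    intro s hs x hx
    have hdiff : DifferentiableWithinAt ℝ (g s) (Set.Icc a b) x :=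
      (hν.differentiableOn_iteratedDerivWithin (by exact_mod_cast hs) hud) x hx
    have := hdiff.hasDerivWithinAt
    rwa [← iteratedDerivWithin_succ] at this
  -- downward induction
  have key : ∀ j : ℕ, j + 1 ≤ k → ∀ y ∈ Set.Icc a b, |g (k - j) y| ≤ C * |y - x₀| ^ j := by
    intro j
    induction j with
    | zero => intro _ y hy
              have h1 : ‖g k y‖ ≤ C₀ := hC₀ y hy
              rw [Real.norm_eq_abs] at h1
              have h2 : |g k y| ≤ C := le_trans h1 (le_max_left _ _)
              simpa using h2
    | succ n ih =>
      intro hn y hy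
      have h1 : n + 1 ≤ k := le_trans (Nat.le_succ _) hn
      have hlt : k - (n + 1) < k := by omega
      have hsucc : k - (n + 1) + 1 = k - n := by omega
      have hzero : g (k - (n + 1)) x₀ = 0 := hders _ (by omega) (by omega)
      have := chain_step (convex_Icc a b) hx₀
        (f := g (k - (n + 1))) (f' := g (k - n))
        (fun x hx => by rw [← hsucc]; exact hder _ hlt x hx)
        (le_of_lt hCpos) (j := n) (fun x hx => ih h1 x hx) y hy
      rwa [hzero, sub_zero] at this
  -- final step
  refine ⟨C, hCpos, fun u hu => ?_⟩
  have hg1 : ∀ y ∈ Set.Icc a b, |g 1 y| ≤ C * |y - x₀| ^ (k - 1) := by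
    have h1 : k - (k - 1) = 1 := by omega
    have := key (k - 1) (by omega)
    rwa [h1] at this
  have hfin := chain_step (convex_Icc a b) hx₀ (f := ν) (f' := g 1)
    (fun x hx => by
      have hdiff : DifferentiableWithinAt ℝ ν (Set.Icc a b) x :=
        (hν.differentiableOn (by exact_mod_cast (show k ≠ 0 by omega))) x hx
      have := hdiff.hasDerivWithinAt
      rwa [← iteratedDerivWithin_one] at this)
    (le_of_lt hCpos) (j := k - 1) hg1 u hu
  have : k - 1 + 1 = k := by omega
  rwa [this] at hfin

lemma taylor_lower (a b : ℝ) (hab : a < b) (k : ℕ) (hk : 1 ≤ k) (ν : ℝ → ℝ)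
    (hν : ContDiffOn ℝ k ν (Set.Icc a b)) (x₀ : ℝ) (hx₀ : x₀ ∈ Set.Icc a b)
    (hmin : ∀ u ∈ Set.Icc a b, ν x₀ ≤ ν u)
    (hders : ∀ s : ℕ, 1 ≤ s → s ≤ k - 1 → iteratedDerivWithin s ν (Set.Icc a b) x₀ = 0)
    (hkder : iteratedDerivWithin k ν (Set.Icc a b) x₀ ≠ 0) :
    ∃ r > (0:ℝ), ∀ u ∈ Set.Icc a b, |u - x₀| ≤ r →
      |iteratedDerivWithin k ν (Set.Icc a b) x₀| / (2 * k.factorial) * |u - x₀| ^ k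
        ≤ ν u - ν x₀ := by
  set g : ℕ → ℝ → ℝ := fun s => iteratedDerivWithin s ν (Set.Icc a b) with hg
  set D : ℝ := g k x₀ with hD
  have hud : UniqueDiffOn ℝ (Set.Icc a b) := uniqueDiffOn_Icc hab
  have hDpos : (0:ℝ) < |D| := abs_pos.2 hkder
  have hfacpos : (0:ℝ) < (k.factorial : ℝ) := by exact_mod_cast k.factorial_pos
  set ε : ℝ := |D| / (4 * k.factorial) with hε
  have hεpos : 0 < ε := by positivity
  -- continuity of g k at x₀ gives r
  have hcont : ContinuousWithinAt (g k) (Set.Icc a b) x₀ :=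
    (hν.continuousOn_iteratedDerivWithin le_rfl hud) x₀ hx₀
  rw [Metric.continuousWithinAt_iff] at hcont
  obtain ⟨δ, hδpos, hδ⟩ := hcont ε hεpos
  set r : ℝ := δ / 2 with hr
  have hrpos : 0 < r := by positivity
  have hbase : ∀ y ∈ Set.Icc a b, |y - x₀| ≤ r → |g k y - D| ≤ ε := by
    intro y hy hyr
    by_cases hyx : y = x₀
    · simp [hyx, hD, le_of_lt hεpos]
    · have := hδ hy (by rw [Real.dist_eq]; linarith)
      rw [Real.dist_eq] at this
      exact le_of_lt this
  set s' : Set ℝ := Set.Icc a b ∩ Set.Icc (x₀ - r) (x₀ + r) with hs'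
  have hs'conv : Convex ℝ s' := (convex_Icc a b).inter (convex_Icc _ _)
  have hx₀s' : x₀ ∈ s' := ⟨hx₀, by constructor <;> simp <;> linarith⟩
  have hsub : s' ⊆ Set.Icc a b := Set.inter_subset_left
  have hmem : ∀ u ∈ Set.Icc a b, |u - x₀| ≤ r → u ∈ s' := by
    intro u hu hur
    rw [abs_le] at hur
    exact ⟨hu, by constructor <;> linarith [hur.1, hur.2]⟩
  have habs : ∀ z ∈ s', |z - x₀| ≤ r := by
    intro z hz
    rw [abs_le]
    exact ⟨by linarith [hz.2.1], by linarith [hz.2.2]⟩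
  -- derivative fact within Icc a b
  have hder : ∀ s : ℕ, s < k → ∀ x ∈ Set.Icc a b,
      HasDerivWithinAt (g s) (g (s + 1) x) (Set.Icc a b) x := by
    intro s hs x hx
    have hdiff : DifferentiableWithinAt ℝ (g s) (Set.Icc a b) x :=
      (hν.differentiableOn_iteratedDerivWithin (by exact_mod_cast hs) hud) x hx
    have := hdiff.hasDerivWithinAt
    rwa [← iteratedDerivWithin_succ] at this
  -- key induction
  have claim : ∀ j : ℕ, j + 1 ≤ k → ∀ y ∈ s',
      |g (k - (j+1)) y - g (k - (j+1)) x₀ - D * (y - x₀) ^ (j+1) / (j+1).factorial|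
        ≤ ε * |y - x₀| ^ (j+1) := by
    intro j
    induction j with
    | zero =>
      intro h1 y hy
      have hstep := chain_step hs'conv hx₀s'
        (f := fun y => g (k-1) y - D * (y - x₀)) (f' := fun y => g k y - D)
        (fun x hx => by
          have h2 : HasDerivWithinAt (g (k-1)) (g k x) s' x := by
            have := (hder (k-1) (by omega) x hx.1).mono hsub
            rwa [show k - 1 + 1 = k by omega] at this
          have h3 : HasDerivAt (fun y => D * (y - x₀)) D x := by
            simpa using ((hasDerivAt_id x).sub_const x₀).const_mul D
          exact h2.sub (h3.hasDerivWithinAt))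
        (le_of_lt hεpos) (j := 0)
        (fun x hx => by simpa using hbase x hx.1 (habs x hx)) y hy
      simp only [sub_self, mul_zero, sub_zero] at hstep
      calc |g (k-1) y - g (k-1) x₀ - D * (y - x₀) ^ (0+1) / (0+1).factorial|
          = |g (k-1) y - D * (y - x₀) - g (k-1) x₀| := by
            rw [Nat.factorial_one]; ring_nf
        _ ≤ ε * |y - x₀| ^ (0+1) := hstep
    | succ j ih =>
      intro hj2 y hy
      show |g (k - (j+2)) y - g (k - (j+2)) x₀ - D * (y - x₀) ^ (j+2) / ((j+2).factorial : ℝ)|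
        ≤ ε * |y - x₀| ^ (j+2)
      have hj1 : j + 1 ≤ k := by omega
      have hzero : g (k - (j+1)) x₀ = 0 := hders _ (by omega) (by omega)
      have hfac2 : ((j+2).factorial : ℝ) = (j+2) * (j+1).factorial := by
        rw [show j + 2 = (j+1)+1 by rfl, Nat.factorial_succ]; push_cast; ring
      have hstep := chain_step hs'conv hx₀s'
        (f := fun y => g (k-(j+2)) y - D * (y - x₀)^(j+2) / (j+2).factorial)
        (f' := fun y => g (k-(j+1)) y - D * (y - x₀)^(j+1) / (j+1).factorial)
        (fun x hx => by
          have h2 : HasDerivWithinAt (g (k-(j+2))) (g (k-(j+1)) x) s' x := by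
            have := (hder (k-(j+2)) (by omega) x hx.1).mono hsub
            rwa [show k - (j+2) + 1 = k - (j+1) by omega] at this
          have h3 : HasDerivAt (fun y => D * (y - x₀)^(j+2) / (j+2).factorial)
              (D * (x - x₀)^(j+1) / (j+1).factorial) x := by
            have h4 : HasDerivAt (fun y => (y - x₀)^(j+2))
                ((j+2 : ℕ) * (x - x₀)^(j+2-1) * 1) x :=
              ((hasDerivAt_id x).sub_const x₀).pow (j+2)
            have h5 := (h4.const_mul D).div_const ((j+2).factorial : ℝ)
            have e : D * (x - x₀)^(j+1) / ((j+1).factorial : ℝ)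
                = D * (((j+2 : ℕ) : ℝ) * (x - x₀)^(j+2-1) * 1) / ((j+2).factorial : ℝ) := by
              rw [show j + 2 - 1 = j + 1 by omega, hfac2]
              have : ((j+1).factorial : ℝ) ≠ 0 := by positivity
              push_cast
              field_simp
            rw [e]; exact h5
          exact h2.sub (h3.hasDerivWithinAt))
        (le_of_lt hεpos) (j := j+1)
        (fun x hx => by
          have := ih hj1 x hx
          rw [hzero, sub_zero] at this
          exact this) y hy
      norm_num at hstep
      calc |g (k-(j+2)) y - g (k-(j+2)) x₀ - D * (y - x₀) ^ (j+2) / (j+2).factorial|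
          = |g (k-(j+2)) y - D * (y - x₀)^(j+2) / (j+2).factorial - g (k-(j+2)) x₀| := by
            ring_nf
        _ ≤ ε * |y - x₀| ^ (j+2) := hstep
  -- instantiate at j = k-1
  have hT : ∀ y ∈ s', |ν y - ν x₀ - D * (y - x₀) ^ k / k.factorial| ≤ ε * |y - x₀| ^ k := by
    intro y hy
    have := claim (k-1) (by omega) y hy
    rw [show k - 1 + 1 = k by omega, show k - k = 0 by omega] at this
    simpa [hg, iteratedDerivWithin_zero] using this
  refine ⟨r, hrpos, fun u hu hur => ?_⟩
  have hus' : u ∈ s' := hmem u hu hur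
  have h1 := hT u hus'
  have h2 : ν x₀ ≤ ν u := hmin u hu
  set t : ℝ := |u - x₀| with ht
  have htnn : 0 ≤ t := abs_nonneg _
  have htk : (0:ℝ) ≤ t ^ k := pow_nonneg htnn k
  set F : ℝ := (k.factorial : ℝ) with hF
  have hFpos : 0 < F := hfacpos
  set A : ℝ := |D| with hA
  have hApos : 0 < A := hDpos
  show A / (2 * F) * t ^ k ≤ ν u - ν x₀
  have habsv : |D * (u - x₀) ^ k / F| = A * t ^ k / F := by
    rw [abs_div, abs_mul, abs_pow, abs_of_pos hFpos]
  rw [abs_le] at h1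
  have he : ε = A / (4 * F) := hε
  rcases le_or_gt 0 (D * (u - x₀) ^ k / F) with hpos | hneg
  · have hval : D * (u - x₀) ^ k / F = A * t ^ k / F := by
      rw [← habsv, abs_of_nonneg hpos]
    have h3 := h1.1
    rw [hval, he] at h3
    have e1 : A * t ^ k / F = 4 * (A / (4 * F) * t ^ k) := by field_simp
    have e2 : A / (2 * F) * t ^ k = 2 * (A / (4 * F) * t ^ k) := by field_simp; ring
    have hq : 0 ≤ A / (4 * F) * t ^ k := by positivity
    linarith
  · have hval : D * (u - x₀) ^ k / F = -(A * t ^ k / F) := by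
      rw [← habsv, abs_of_neg hneg]; ring
    have h3 := h1.2
    rw [hval, he] at h3
    have e1 : A * t ^ k / F = 4 * (A / (4 * F) * t ^ k) := by field_simp
    have e2 : A / (2 * F) * t ^ k = 2 * (A / (4 * F) * t ^ k) := by field_simp; ring
    have hq : 0 ≤ A / (4 * F) * t ^ k := by positivity
    linarith

lemma global_lower (a b : ℝ) (hab : a < b) (k : ℕ) (hk : 1 ≤ k) (ν : ℝ → ℝ)
    (hν : ContDiffOn ℝ k ν (Set.Icc a b)) (x₀ : ℝ) (hx₀ : x₀ ∈ Set.Icc a b)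
    (hmin : ∀ u ∈ Set.Icc a b, ν x₀ ≤ ν u)
    (huniq : ∀ u ∈ Set.Icc a b, ν u = ν x₀ → u = x₀)
    (hders : ∀ s : ℕ, 1 ≤ s → s ≤ k - 1 → iteratedDerivWithin s ν (Set.Icc a b) x₀ = 0)
    (hkder : iteratedDerivWithin k ν (Set.Icc a b) x₀ ≠ 0) :
    ∃ c > (0:ℝ), ∀ u ∈ Set.Icc a b, c * |u - x₀| ^ k ≤ ν u - ν x₀ := by
  obtain ⟨r, hrpos, hloc⟩ := taylor_lower a b hab k hk ν hν x₀ hx₀ hmin hders hkder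
  set c₁ : ℝ := |iteratedDerivWithin k ν (Set.Icc a b) x₀| / (2 * k.factorial) with hc₁
  have hfacpos : (0:ℝ) < (k.factorial : ℝ) := by exact_mod_cast k.factorial_pos
  have hc₁pos : 0 < c₁ := by
    have : (0:ℝ) < |iteratedDerivWithin k ν (Set.Icc a b) x₀| := abs_pos.2 hkder
    positivity
  set K : Set ℝ := Set.Icc a b ∩ {y | r ≤ |y - x₀|} with hK
  have hKclosed : IsClosed {y : ℝ | r ≤ |y - x₀|} :=
    isClosed_le continuous_const ((continuous_id.sub continuous_const).abs)
  have hKcomp : IsCompact K := isCompact_Icc.inter_right hKclosed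
  have hdiam : ∀ u ∈ Set.Icc a b, |u - x₀| ≤ b - a := by
    intro u hu
    rw [abs_le]
    constructor <;> [linarith [hu.1, hx₀.2]; linarith [hu.2, hx₀.1]]
  rcases Set.eq_empty_or_nonempty K with hKe | hKne
  · refine ⟨c₁, hc₁pos, fun u hu => ?_⟩
    by_cases h : |u - x₀| ≤ r
    · exact hloc u hu h
    · exfalso
      have : u ∈ K := ⟨hu, le_of_lt (not_le.1 h)⟩
      rw [hKe] at this
      exact this
  · obtain ⟨y₀, hy₀K, hy₀min⟩ := hKcomp.exists_isMinOn hKne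
      ((hν.continuousOn).mono Set.inter_subset_left)
    set ε₂ : ℝ := ν y₀ - ν x₀ with hε₂
    have hε₂pos : 0 < ε₂ := by
      have h1 : ν x₀ ≤ ν y₀ := hmin y₀ hy₀K.1
      rcases eq_or_lt_of_le h1 with he | hl
      · exfalso
        have := huniq y₀ hy₀K.1 he.symm
        have hr2 : r ≤ |y₀ - x₀| := hy₀K.2
        rw [this] at hr2
        simp at hr2
        linarith
      · simpa [hε₂] using hl
    have hba : (0:ℝ) < (b - a) ^ k := pow_pos (by linarith) k
    refine ⟨min c₁ (ε₂ / (b - a) ^ k), lt_min hc₁pos (div_pos hε₂pos hba), fun u hu => ?_⟩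
    by_cases h : |u - x₀| ≤ r
    · calc min c₁ (ε₂ / (b - a) ^ k) * |u - x₀| ^ k
          ≤ c₁ * |u - x₀| ^ k :=
            mul_le_mul_of_nonneg_right (min_le_left _ _) (by positivity)
        _ ≤ ν u - ν x₀ := hloc u hu h
    · have huK : u ∈ K := ⟨hu, le_of_lt (not_le.1 h)⟩
      have h1 : ε₂ ≤ ν u - ν x₀ := by
        have := hy₀min huK
        simp only [Set.mem_setOf_eq] at this
        have h2 : ν y₀ ≤ ν u := this
        simp [hε₂]; linarith
      calc min c₁ (ε₂ / (b - a) ^ k) * |u - x₀| ^ k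
          ≤ ε₂ / (b - a) ^ k * |u - x₀| ^ k :=
            mul_le_mul_of_nonneg_right (min_le_right _ _) (by positivity)
        _ ≤ ε₂ / (b - a) ^ k * (b - a) ^ k := by
            apply mul_le_mul_of_nonneg_left
              (pow_le_pow_left₀ (abs_nonneg _) (hdiam u hu) k) (by positivity)
        _ = ε₂ := by field_simp
        _ ≤ ν u - ν x₀ := h1

lemma exp_int {A B x₀ s : ℝ} (hA : A ≤ x₀) (hB : x₀ ≤ B) (hs : 0 < s) :
    ∫ u in A..B, Real.exp (-(s * |u - x₀|)) ≤ 2 / s := by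
  have hcont : Continuous fun u : ℝ => Real.exp (-(s * |u - x₀|)) :=
    Real.continuous_exp.comp
      ((continuous_const.mul ((continuous_id.sub continuous_const).abs)).neg)
  have hi1 : IntervalIntegrable (fun u : ℝ => Real.exp (-(s * |u - x₀|)))
      MeasureTheory.volume A x₀ := hcont.intervalIntegrable _ _
  have hi2 : IntervalIntegrable (fun u : ℝ => Real.exp (-(s * |u - x₀|)))
      MeasureTheory.volume x₀ B := hcont.intervalIntegrable _ _
  rw [← intervalIntegral.integral_add_adjacent_intervals hi1 hi2]
  have h1 : ∫ u in A..x₀, Real.exp (-(s * |u - x₀|)) ≤ 1 / s := by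
    have hcongr : (∫ u in A..x₀, Real.exp (-(s * |u - x₀|)))
        = ∫ u in A..x₀, Real.exp (s * u + -(s * x₀)) := by
      apply intervalIntegral.integral_congr
      intro u hu
      rw [Set.uIcc_of_le hA] at hu
      show Real.exp (-(s * |u - x₀|)) = Real.exp (s * u + -(s * x₀))
      have h : |u - x₀| = x₀ - u := by
        rw [abs_of_nonpos (by linarith [hu.2])]; ring
      rw [h]; ring_nf
    rw [hcongr, intervalIntegral.integral_comp_mul_add Real.exp (ne_of_gt hs) (-(s * x₀)),
      integral_exp, show s * x₀ + -(s * x₀) = 0 by ring, Real.exp_zero, smul_eq_mul]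
    have he : (0:ℝ) ≤ Real.exp (s * A + -(s * x₀)) := le_of_lt (Real.exp_pos _)
    rw [one_div]
    calc s⁻¹ * (1 - Real.exp (s * A + -(s * x₀))) ≤ s⁻¹ * 1 := by
          apply mul_le_mul_of_nonneg_left (by linarith) (le_of_lt (inv_pos.2 hs))
      _ = s⁻¹ := mul_one _
  have h2 : ∫ u in x₀..B, Real.exp (-(s * |u - x₀|)) ≤ 1 / s := by
    have hcongr : (∫ u in x₀..B, Real.exp (-(s * |u - x₀|)))
        = ∫ u in x₀..B, Real.exp (-s * u + s * x₀) := by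
      apply intervalIntegral.integral_congr
      intro u hu
      rw [Set.uIcc_of_le hB] at hu
      show Real.exp (-(s * |u - x₀|)) = Real.exp (-s * u + s * x₀)
      have h : |u - x₀| = u - x₀ := abs_of_nonneg (by linarith [hu.1])
      rw [h]; ring_nf
    rw [hcongr, intervalIntegral.integral_comp_mul_add Real.exp (neg_ne_zero.2 (ne_of_gt hs))
      (s * x₀), integral_exp, show -s * x₀ + s * x₀ = 0 by ring, Real.exp_zero, smul_eq_mul]
    have he : (0:ℝ) ≤ Real.exp (-s * B + s * x₀) := le_of_lt (Real.exp_pos _)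
    have hinv : (0:ℝ) < s⁻¹ := inv_pos.2 hs
    rw [one_div]
    have : (-s)⁻¹ * (Real.exp (-s * B + s * x₀) - 1)
        = s⁻¹ * (1 - Real.exp (-s * B + s * x₀)) := by
      rw [inv_neg]; ring
    rw [this]
    calc s⁻¹ * (1 - Real.exp (-s * B + s * x₀)) ≤ s⁻¹ * 1 := by
          apply mul_le_mul_of_nonneg_left (by linarith) (le_of_lt hinv)
      _ = s⁻¹ := mul_one _
  have : 2 / s = 1 / s + 1 / s := by ring
  linarith

/-- Laplace-method asymptotic `∫_a^b m^{-2ν(u)} du ≍ m^{-2ν(u*)} (ln m)^{-1/k}`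
when `ν` is `k`-times continuously differentiable on `[a,b]`, attains its minimum
at a unique point `u*`, and `k ≥ 1` is the order of the first nonvanishing
derivative of `ν` at `u*`. -/
theorem stmt_12 (a b : ℝ) (hab : a < b) (k : ℕ) (hk : 1 ≤ k) (ν : ℝ → ℝ)
    (hν : ContDiffOn ℝ k ν (Set.Icc a b))
    (ustar : ℝ) (hustar : ustar ∈ Set.Icc a b)
    (hmin : ∀ u ∈ Set.Icc a b, ν ustar ≤ ν u)
    (huniq : ∀ u ∈ Set.Icc a b, ν u = ν ustar → u = ustar)
    (hders : ∀ s : ℕ, 1 ≤ s → s ≤ k - 1 →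
      iteratedDerivWithin s ν (Set.Icc a b) ustar = 0)
    (hkder : iteratedDerivWithin k ν (Set.Icc a b) ustar ≠ 0) :
    ∃ C₁ > (0:ℝ), ∃ C₂ > (0:ℝ), ∃ m₀ : ℝ, 2 ≤ m₀ ∧ ∀ m : ℝ, m₀ ≤ m →
      C₁ * m ^ (-(2 * ν ustar)) * Real.log m ^ (-(1 / (k : ℝ))) ≤
          (∫ u in a..b, m ^ (-(2 * ν u))) ∧
      (∫ u in a..b, m ^ (-(2 * ν u))) ≤
          C₂ * m ^ (-(2 * ν ustar)) * Real.log m ^ (-(1 / (k : ℝ))) := by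
  obtain ⟨Cu, hCu, hup⟩ := taylor_upper a b hab k hk ν hν ustar hustar hders
  obtain ⟨c, hc, hlo⟩ := global_lower a b hab k hk ν hν ustar hustar hmin huniq hders hkder
  have hkR : (0:ℝ) < (k:ℝ) := by exact_mod_cast hk
  have hνc : ContinuousOn ν (Set.Icc a b) := hν.continuousOn
  set κ : ℝ := -(1 / (k:ℝ)) with hκ
  refine ⟨Real.exp (-1) * (2*Cu) ^ κ, by positivity,
          2 * Real.exp 1 * (2*c) ^ κ, by positivity,
          max 2 (Real.exp (max 1 ((2/(b-a))^k / (2*Cu)))), le_max_left _ _,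
          fun m hm => ?_⟩
  have hm2 : (2:ℝ) ≤ m := le_trans (le_max_left _ _) hm
  have hmpos : (0:ℝ) < m := by linarith
  have hm1 : (1:ℝ) < m := by linarith
  set L : ℝ := Real.log m with hL
  have hLge : max 1 ((2/(b-a))^k / (2*Cu)) ≤ L := by
    have h1 : Real.exp (max 1 ((2/(b-a))^k / (2*Cu))) ≤ m :=
      le_trans (le_max_right _ _) hm
    have := Real.log_le_log (Real.exp_pos _) h1
    rwa [Real.log_exp] at this
  have hL1 : (1:ℝ) ≤ L := le_trans (le_max_left _ _) hLge
  have hLΛ : (2/(b-a))^k / (2*Cu) ≤ L := le_trans (le_max_right _ _) hLge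
  have hLpos : (0:ℝ) < L := by linarith
  have heq : ∀ x : ℝ, m ^ x = Real.exp (L * x) := fun x => Real.rpow_def_of_pos hmpos x
  -- rewrite all rpow with base m as exp
  simp only [heq]
  -- continuity of the integrand
  have hcint : ContinuousOn (fun u => Real.exp (L * (-(2 * ν u)))) (Set.Icc a b) :=
    Real.continuous_exp.comp_continuousOn
      (continuousOn_const.mul ((continuousOn_const.mul hνc).neg))
  have hk0 : (k:ℝ) ≠ 0 := ne_of_gt hkR
  constructor
  · -- LOWER BOUND
    set ℓ : ℝ := (2 * Cu * L) ^ κ with hℓ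
    have hCuL : (0:ℝ) < 2 * Cu * L := mul_pos (mul_pos two_pos hCu) hLpos
    have hℓpos : 0 < ℓ := Real.rpow_pos_of_pos hCuL _
    have hℓk : ℓ ^ k = (2 * Cu * L)⁻¹ := by
      rw [hℓ, ← Real.rpow_natCast ((2 * Cu * L) ^ κ) k, ← Real.rpow_mul hCuL.le]
      rw [show κ * (k:ℝ) = -1 by rw [hκ]; field_simp, Real.rpow_neg_one]
    have hℓle : ℓ ≤ (b - a) / 2 := by
      have h0 : (0:ℝ) < 2/(b-a) := div_pos two_pos (by linarith)
      have h1 : (2/(b-a))^k ≤ 2 * Cu * L := by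
        have h2 := mul_le_mul_of_nonneg_left hLΛ (le_of_lt (mul_pos two_pos hCu))
        have hCune : Cu ≠ 0 := ne_of_gt hCu
        have hban : b - a ≠ 0 := ne_of_gt (by linarith)
        have h3 : 2 * Cu * ((2/(b-a))^k / (2*Cu)) = (2/(b-a))^k := by
          field_simp
        nlinarith [h2, h3]
      have h3 : ((2/(b-a))^k : ℝ) ^ (1/(k:ℝ)) ≤ (2*Cu*L) ^ (1/(k:ℝ)) :=
        Real.rpow_le_rpow (by positivity) h1 (by positivity)
      have h4 : ((2/(b-a))^k : ℝ) ^ (1/(k:ℝ)) = 2/(b-a) := by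
        rw [← Real.rpow_natCast (2/(b-a)) k, ← Real.rpow_mul h0.le]
        rw [show (k:ℝ) * (1/(k:ℝ)) = 1 by field_simp, Real.rpow_one]
      have h5 : ℓ = ((2*Cu*L) ^ (1/(k:ℝ)))⁻¹ := by
        rw [hℓ, hκ, Real.rpow_neg hCuL.le]
      rw [h5]
      have h6 : 2/(b-a) ≤ (2*Cu*L)^(1/(k:ℝ)) := h4 ▸ h3
      calc ((2*Cu*L)^(1/(k:ℝ)))⁻¹ ≤ (2/(b-a))⁻¹ := inv_anti₀ h0 h6
        _ = (b-a)/2 := by rw [inv_div]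
    obtain ⟨p, q, hap, hpq, hqb, hlen, hnear⟩ :
        ∃ p q : ℝ, a ≤ p ∧ p ≤ q ∧ q ≤ b ∧ q - p = ℓ ∧
          ∀ u ∈ Set.Icc p q, |u - ustar| ≤ ℓ := by
      rcases le_or_gt ustar ((a+b)/2) with hside | hside
      · refine ⟨ustar, ustar + ℓ, hustar.1, by linarith, by linarith, by ring,
          fun u hu => ?_⟩
        rw [abs_le]; exact ⟨by linarith [hu.1], by linarith [hu.2]⟩
      · refine ⟨ustar - ℓ, ustar, by linarith [hustar.2], by linarith, hustar.2, by ring,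
          fun u hu => ?_⟩
        rw [abs_le]; exact ⟨by linarith [hu.1], by linarith [hu.2]⟩
    have hpt2 : ∀ u ∈ Set.Icc p q, Real.exp (L * (-(2 * ν ustar))) * Real.exp (-1)
        ≤ Real.exp (L * (-(2 * ν u))) := by
      intro u hu
      have hu' : u ∈ Set.Icc a b := ⟨le_trans hap hu.1, le_trans hu.2 hqb⟩
      have h1 : ν u - ν ustar ≤ Cu * |u - ustar|^k :=
        le_trans (le_abs_self _) (hup u hu')
      have h2 : |u - ustar| ^ k ≤ ℓ ^ k := pow_le_pow_left₀ (abs_nonneg _) (hnear u hu) k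
      have h3 : Cu * ℓ^k = 1/(2*L) := by
        rw [hℓk]; field_simp
      have h4 : ν u - ν ustar ≤ 1/(2*L) := by
        calc ν u - ν ustar ≤ Cu * |u - ustar|^k := h1
          _ ≤ Cu * ℓ^k := mul_le_mul_of_nonneg_left h2 hCu.le
          _ = 1/(2*L) := h3
      rw [← Real.exp_add]
      apply Real.exp_le_exp.2
      have h5 := mul_le_mul_of_nonneg_left h4 (by linarith : (0:ℝ) ≤ 2*L)
      have h6 : 2*L*(1/(2*L)) = 1 := by field_simp
      nlinarith [h5, h6]
    have hint : ∀ p' q', a ≤ p' → q' ≤ b → p' ≤ q' →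
        IntervalIntegrable (fun u => Real.exp (L * (-(2 * ν u))))
          MeasureTheory.volume p' q' := by
      intro p' q' h1 h2 h3
      apply ContinuousOn.intervalIntegrable
      apply hcint.mono
      rw [Set.uIcc_of_le h3]
      exact Set.Icc_subset_Icc h1 h2
    have hsplit2 := intervalIntegral.integral_add_adjacent_intervals
      (hint p q hap hqb hpq) (hint q b (le_trans hap hpq) le_rfl hqb)
    have hsplit1 := intervalIntegral.integral_add_adjacent_intervals
      (hint a p le_rfl (le_trans hpq hqb) hap) (hint p b hap le_rfl (le_trans hpq hqb))
    have hnn1 : 0 ≤ ∫ u in a..p, Real.exp (L * (-(2 * ν u))) :=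
      intervalIntegral.integral_nonneg hap (fun u _ => (Real.exp_pos _).le)
    have hnn2 : 0 ≤ ∫ u in q..b, Real.exp (L * (-(2 * ν u))) :=
      intervalIntegral.integral_nonneg hqb (fun u _ => (Real.exp_pos _).le)
    have hmid : ℓ * (Real.exp (L * (-(2 * ν ustar))) * Real.exp (-1))
        ≤ ∫ u in p..q, Real.exp (L * (-(2 * ν u))) := by
      have hm2 := intervalIntegral.integral_mono_on hpq
        (intervalIntegrable_const) (hint p q hap hqb hpq) hpt2
      rw [intervalIntegral.integral_const, hlen, smul_eq_mul] at hm2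
      exact hm2
    have hfinal : ℓ * (Real.exp (L * (-(2 * ν ustar))) * Real.exp (-1))
        ≤ ∫ u in a..b, Real.exp (L * (-(2 * ν u))) := by
      rw [← hsplit1, ← hsplit2]; linarith
    have e1 : ℓ = (2*Cu) ^ κ * L ^ κ := by
      rw [hℓ]; exact Real.mul_rpow (by positivity) hLpos.le
    have e2 : Real.exp (-1) * (2 * Cu) ^ κ * Real.exp (L * (-(2 * ν ustar))) * L ^ κ
        = ℓ * (Real.exp (L * (-(2 * ν ustar))) * Real.exp (-1)) := by
      rw [e1]; ring
    rw [e2]; exact hfinal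
  · -- UPPER BOUND
    set μ : ℝ := 2 * c * L with hμ
    have hμpos : (0:ℝ) < μ := mul_pos (mul_pos two_pos hc) hLpos
    set σ : ℝ := μ ^ (1/(k:ℝ)) with hσ
    have hσpos : 0 < σ := Real.rpow_pos_of_pos hμpos _
    have hσk : σ ^ k = μ := by
      rw [hσ, ← Real.rpow_natCast (μ ^ (1/(k:ℝ))) k, ← Real.rpow_mul hμpos.le]
      rw [show (1/(k:ℝ)) * (k:ℝ) = 1 by field_simp, Real.rpow_one]
    have hptwise : ∀ u ∈ Set.Icc a b, Real.exp (L * (-(2 * ν u)))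
        ≤ Real.exp 1 * Real.exp (L * (-(2 * ν ustar))) * Real.exp (-(σ * |u - ustar|)) := by
      intro u hu
      rw [← Real.exp_add, ← Real.exp_add]
      apply Real.exp_le_exp.2
      have h1 : c * |u - ustar|^k ≤ ν u - ν ustar := hlo u hu
      have htnn : (0:ℝ) ≤ |u - ustar| := abs_nonneg _
      have h2 : σ * |u - ustar| - 1 ≤ μ * |u - ustar| ^ k := by
        have hsk : (σ * |u - ustar|) ^ k = μ * |u - ustar| ^ k := by
          rw [mul_pow, hσk]
        rcases le_or_gt (σ * |u - ustar|) 1 with hle | hlt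
        · nlinarith [pow_nonneg (mul_nonneg hσpos.le htnn) k, hsk]
        · have h7 : σ * |u - ustar| ≤ (σ * |u - ustar|) ^ k :=
            le_self_pow₀ hlt.le (by omega)
          linarith [hsk ▸ h7]
      have h3 := mul_le_mul_of_nonneg_left h1 (by linarith : (0:ℝ) ≤ 2*L)
      have hμe : μ * |u - ustar| ^ k = 2*L*(c * |u - ustar|^k) := by rw [hμ]; ring
      linarith [h2, h3, hμe]
    have hrhs_cont : Continuous fun u : ℝ =>
        Real.exp 1 * Real.exp (L * (-(2 * ν ustar))) * Real.exp (-(σ * |u - ustar|)) :=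
      continuous_const.mul (Real.continuous_exp.comp
        ((continuous_const.mul ((continuous_id.sub continuous_const).abs)).neg))
    have hmono := intervalIntegral.integral_mono_on hab.le
      (ContinuousOn.intervalIntegrable (μ := MeasureTheory.volume) (by rw [Set.uIcc_of_le hab.le]; exact hcint))
      (hrhs_cont.intervalIntegrable a b) hptwise
    have hconst : (∫ u in a..b, Real.exp 1 * Real.exp (L * (-(2 * ν ustar)))
          * Real.exp (-(σ * |u - ustar|)))
        = Real.exp 1 * Real.exp (L * (-(2 * ν ustar)))
          * ∫ u in a..b, Real.exp (-(σ * |u - ustar|)) := by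
      rw [← intervalIntegral.integral_const_mul]
    have hKnn : (0:ℝ) ≤ Real.exp 1 * Real.exp (L * (-(2 * ν ustar))) := by positivity
    have hexpint := exp_int hustar.1 hustar.2 hσpos
    have e1 : μ ^ κ = (2*c) ^ κ * L ^ κ := by
      rw [hμ]; exact Real.mul_rpow (by positivity) hLpos.le
    have e2 : 2 / σ = 2 * μ ^ κ := by
      rw [hσ, hκ, Real.rpow_neg hμpos.le]; ring
    calc (∫ u in a..b, Real.exp (L * (-(2 * ν u))))
        ≤ ∫ u in a..b, Real.exp 1 * Real.exp (L * (-(2 * ν ustar)))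
            * Real.exp (-(σ * |u - ustar|)) := hmono
      _ = Real.exp 1 * Real.exp (L * (-(2 * ν ustar)))
            * ∫ u in a..b, Real.exp (-(σ * |u - ustar|)) := hconst
      _ ≤ Real.exp 1 * Real.exp (L * (-(2 * ν ustar))) * (2 / σ) :=
            mul_le_mul_of_nonneg_left hexpint hKnn
      _ = 2 * Real.exp 1 * (2*c) ^ κ * Real.exp (L * (-(2 * ν ustar))) * L ^ κ := by
            rw [e2, e1]; ring
end

section
/- Let v : [0, 1] → ℝ be continuously differentiable with |v′(x)| ≤ v₀ for all x ∈ [0, 1], where v₀ > 0, and let v* = min_{x ∈ [0,1]} v(x). Then there exist a constant K > 0 and a real number m₀ ≥ 3, both depending only on v₀, such that for every real m ≥ m₀, every even integer M ≥ 2 and every d ∈ [0, 1]: (1/M) Σ_{l=1}^{M} m^{−2·v((l − 1 + d)/M)} ≥ K · m^{−2v*} · m^{−3v₀/M} · ( (ln m)^{−1} + M^{−1} ). -/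
/-- Counting lemma: given `c₀ ∈ [0, M+1]` and `1 ≤ n` with `2n ≤ M`, there are `n`
indices `l ∈ [1, M]` all within real distance `n` of `c₀`. -/
lemma stmt_13_grid_count (M n : ℕ) (hM : 1 ≤ M) (hn1 : 1 ≤ n) (hn2 : 2 * n ≤ M)
    (c₀ : ℝ) (hc0 : 0 ≤ c₀) (hc1 : c₀ ≤ M + 1) :
    ∃ S : Finset ℕ, S ⊆ Finset.Icc 1 M ∧ S.card = n ∧ ∀ l ∈ S, |(l : ℝ) - c₀| ≤ n := by
  set k : ℕ := min M (max 1 ⌈c₀⌉₊) with hkdef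
  have hk1 : 1 ≤ k := le_min hM (le_max_left _ _)
  have hkM : k ≤ M := min_le_left _ _
  have hn1' : (1:ℝ) ≤ n := by exact_mod_cast hn1
  have hkc : |(k : ℝ) - c₀| ≤ 1 := by
    rw [abs_le]
    constructor
    · -- -1 ≤ k - c₀, i.e. c₀ - 1 ≤ k
      have h1 : min M ⌈c₀⌉₊ ≤ k := min_le_min_left M (le_max_right 1 _)
      have h1' : ((min M ⌈c₀⌉₊ : ℕ) : ℝ) ≤ k := by exact_mod_cast h1
      have h2 : ((min M ⌈c₀⌉₊ : ℕ) : ℝ) = min (M:ℝ) (⌈c₀⌉₊:ℝ) := by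
        simp [Nat.cast_min]
      have h3 : c₀ - 1 ≤ min (M:ℝ) (⌈c₀⌉₊:ℝ) := by
        apply le_min
        · linarith
        · have := Nat.le_ceil c₀
          linarith
      linarith [h2 ▸ h1']
    · -- k - c₀ ≤ 1
      have h1 : k ≤ max 1 ⌈c₀⌉₊ := min_le_right _ _
      have h1' : (k : ℝ) ≤ ((max 1 ⌈c₀⌉₊ : ℕ) : ℝ) := by exact_mod_cast h1
      have h2 : ((max 1 ⌈c₀⌉₊ : ℕ) : ℝ) = max (1:ℝ) (⌈c₀⌉₊:ℝ) := by
        simp [Nat.cast_max]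
      have h3 : max (1:ℝ) (⌈c₀⌉₊:ℝ) ≤ c₀ + 1 := by
        apply max_le
        · linarith
        · exact (Nat.ceil_lt_add_one hc0).le
      linarith [h2 ▸ h1']
  rw [abs_le] at hkc
  by_cases hside : 2 * k ≤ M
  · refine ⟨Finset.Icc k (k + n - 1), ?_, ?_, ?_⟩
    · intro l hl
      rw [Finset.mem_Icc] at hl ⊢
      omega
    · rw [Nat.card_Icc]; omega
    · intro l hl
      rw [Finset.mem_Icc] at hl
      have hlo : (k:ℝ) ≤ l := by exact_mod_cast hl.1
      have hhi : (l:ℝ) + 1 ≤ (k:ℝ) + n := by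
        have : l + 1 ≤ k + n := by omega
        exact_mod_cast this
      rw [abs_le]
      constructor <;> linarith
  · have hkn : n < k := by omega
    refine ⟨Finset.Icc (k + 1 - n) k, ?_, ?_, ?_⟩
    · intro l hl
      rw [Finset.mem_Icc] at hl ⊢
      omega
    · rw [Nat.card_Icc]; omega
    · intro l hl
      rw [Finset.mem_Icc] at hl
      have hhi : (l:ℝ) ≤ k := by exact_mod_cast hl.2
      have hlo : (k:ℝ) + 1 ≤ (l:ℝ) + n := by
        have : k + 1 ≤ l + n := by omega
        exact_mod_cast this
      rw [abs_le]
      constructor <;> linarith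

/-- Lower bound on the pseudo-uniform grid average of `m^{-2v}`: for `v : [0,1] → ℝ`
continuously differentiable with `|v'| ≤ v₀` and minimum value `v*`, there exist
`K > 0` and `m₀ ≥ 3` depending only on `v₀` such that for all real `m ≥ m₀`, every
even integer `M ≥ 2` and every `d ∈ [0,1]`,
`(1/M) ∑_{l=1}^M m^{-2 v((l-1+d)/M)} ≥ K m^{-2v*} m^{-3v₀/M} ((ln m)⁻¹ + M⁻¹)`. -/
theorem stmt_13 (v₀ : ℝ) (hv₀ : 0 < v₀) :
    ∃ K > (0:ℝ), ∃ m₀ : ℝ, 3 ≤ m₀ ∧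
      ∀ v v' : ℝ → ℝ,
        (∀ x ∈ Set.Icc (0:ℝ) 1, HasDerivAt v (v' x) x) →
        ContinuousOn v' (Set.Icc (0:ℝ) 1) →
        (∀ x ∈ Set.Icc (0:ℝ) 1, |v' x| ≤ v₀) →
        ∀ vstar : ℝ, IsLeast (v '' Set.Icc (0:ℝ) 1) vstar →
        ∀ m : ℝ, m₀ ≤ m → ∀ M : ℕ, 2 ≤ M → Even M → ∀ d ∈ Set.Icc (0:ℝ) 1,
          (1 / (M : ℝ)) * ∑ l ∈ Finset.Icc 1 M, m ^ (-(2 * v (((l : ℝ) - 1 + d) / M)))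
            ≥ K * m ^ (-(2 * vstar)) * m ^ (-(3 * v₀) / M) *
                ((Real.log m)⁻¹ + (M : ℝ)⁻¹) := by
  refine ⟨Real.exp (-(2 * v₀)) / 4, by positivity, 8, by norm_num, ?_⟩
  intro v v' hderiv hcont hbound vstar hleast m hm M hM hMeven d hd
  obtain ⟨hd0, hd1⟩ := hd
  have hm0 : (0:ℝ) < m := by linarith
  have hm1 : (1:ℝ) ≤ m := by linarith
  have hM0 : (0:ℝ) < M := by exact_mod_cast Nat.lt_of_lt_of_le (by norm_num) hM
  set L := Real.log m with hLdef
  have hL2 : (2:ℝ) ≤ L := by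
    rw [hLdef, Real.le_log_iff_exp_le hm0]
    have h9 := Real.exp_one_lt_d9
    have hpos := Real.exp_pos 1
    have : Real.exp 2 = Real.exp 1 * Real.exp 1 := by
      rw [← Real.exp_add]; norm_num
    nlinarith
  have hL0 : (0:ℝ) < L := by linarith
  obtain ⟨⟨xstar, hxstar_mem, hxstar_eq⟩, hlb⟩ := hleast
  have hxs0 : (0:ℝ) ≤ xstar := hxstar_mem.1
  have hxs1 : xstar ≤ 1 := hxstar_mem.2
  -- Lipschitz bound from the derivative bound
  have hlip : ∀ x ∈ Set.Icc (0:ℝ) 1, |v x - v xstar| ≤ v₀ * |x - xstar| := by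
    intro x hx
    have := (convex_Icc (0:ℝ) 1).norm_image_sub_le_of_norm_hasDerivWithin_le
      (f := v) (f' := v') (fun z hz => (hderiv z hz).hasDerivWithinAt)
      (fun z hz => by simpa [Real.norm_eq_abs] using hbound z hz) hxstar_mem hx
    simpa [Real.norm_eq_abs] using this
  set c₀ : ℝ := xstar * M + 1 - d with hc₀def
  have hc0 : 0 ≤ c₀ := by nlinarith
  have hc1 : c₀ ≤ M + 1 := by nlinarith
  set n : ℕ := max 1 ⌊(M:ℝ)/L⌋₊ with hndef
  have hn1 : 1 ≤ n := le_max_left _ _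
  have hn1' : (1:ℝ) ≤ n := by exact_mod_cast hn1
  have hfloor_le : (⌊(M:ℝ)/L⌋₊ : ℝ) ≤ (M:ℝ)/L := Nat.floor_le (by positivity)
  have hn2 : 2 * n ≤ M := by
    obtain ⟨k, hk⟩ := hMeven
    have hk1 : 1 ≤ k := by omega
    have hML : (M:ℝ)/L ≤ (k:ℝ) := by
      rw [div_le_iff₀ hL0]
      have hMk : (M:ℝ) = 2 * k := by rw [hk]; push_cast; ring
      nlinarith [show (0:ℝ) < k by exact_mod_cast hk1]
    have hfk : ⌊(M:ℝ)/L⌋₊ ≤ k := by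
      calc ⌊(M:ℝ)/L⌋₊ ≤ ⌊(k:ℝ)⌋₊ := Nat.floor_mono hML
        _ = k := Nat.floor_natCast k
    omega
  have hncast : (n:ℝ) = max 1 ((⌊(M:ℝ)/L⌋₊ : ℕ) : ℝ) := by
    rw [hndef]; exact_mod_cast Nat.cast_max ..
  have hn_le : (n:ℝ) ≤ 1 + (M:ℝ)/L := by
    rw [hncast]
    apply max_le
    · have : (0:ℝ) ≤ (M:ℝ)/L := by positivity
      linarith
    · linarith
  have hn_ge : 1 + (M:ℝ)/L ≤ 4 * n := by
    rcases le_or_gt ((M:ℝ)/L) 3 with h | h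
    · linarith
    · have h1 : (M:ℝ)/L - 1 < (⌊(M:ℝ)/L⌋₊ : ℝ) := Nat.sub_one_lt_floor _
      have h2 : ((⌊(M:ℝ)/L⌋₊ : ℕ) : ℝ) ≤ (n:ℝ) := by
        rw [hncast]; exact le_max_right _ _
      linarith
  obtain ⟨S, hSsub, hScard, hSdist⟩ :=
    stmt_13_grid_count M n (by omega) hn1 hn2 c₀ hc0 hc1
  have hEpos : (0:ℝ) < Real.exp (-(2 * v₀)) := Real.exp_pos _
  have hApos : (0:ℝ) < m ^ (-(2 * vstar)) := Real.rpow_pos_of_pos hm0 _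
  have hBpos : (0:ℝ) < m ^ (-(3 * v₀) / M) := Real.rpow_pos_of_pos hm0 _
  -- per-term lower bound on the good indices
  have hterm : ∀ l ∈ S,
      Real.exp (-(2 * v₀)) * m ^ (-(2 * vstar)) * m ^ (-(3 * v₀) / M)
        ≤ m ^ (-(2 * v (((l:ℝ) - 1 + d) / M))) := by
    intro l hl
    have hlmem := hSsub hl
    rw [Finset.mem_Icc] at hlmem
    have hl1 : (1:ℝ) ≤ l := by exact_mod_cast hlmem.1
    have hlM : (l:ℝ) ≤ M := by exact_mod_cast hlmem.2
    set x : ℝ := ((l:ℝ) - 1 + d) / M with hxdef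
    have hxmem : x ∈ Set.Icc (0:ℝ) 1 := by
      constructor
      · apply div_nonneg (by linarith) hM0.le
      · rw [div_le_one hM0]; linarith
    have hdist : |x - xstar| ≤ 1/M + 1/L := by
      have h1 : |(l:ℝ) - c₀| ≤ n := hSdist l hl
      have hx' : x - xstar = ((l:ℝ) - c₀) / M := by
        rw [hxdef, hc₀def]; field_simp; ring
      rw [hx', abs_div, abs_of_pos hM0, div_le_iff₀ hM0]
      have hcalc : (1/M + 1/L) * M = 1 + (M:ℝ)/L := by field_simp
      rw [hcalc]
      linarith
    have hvx : v x ≤ vstar + (v₀/M + v₀/L) := by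
      have h1 := hlip x hxmem
      rw [hxstar_eq] at h1
      have h2 : v₀ * |x - xstar| ≤ v₀ * (1/M + 1/L) :=
        mul_le_mul_of_nonneg_left hdist hv₀.le
      have h3 := (abs_le.mp h1).2
      have h4 : v₀ * (1/M + 1/L) = v₀/M + v₀/L := by ring
      linarith
    have hexp : -(2 * vstar) + -(2 * v₀)/M + -(2 * v₀)/L ≤ -(2 * v x) := by
      have h5 : -(2 * v₀)/M = -(2 * (v₀/M)) := by ring
      have h6 : -(2 * v₀)/L = -(2 * (v₀/L)) := by ring
      rw [h5, h6]; linarith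
    have hEeq : m ^ (-(2 * v₀)/L) = Real.exp (-(2 * v₀)) := by
      rw [Real.rpow_def_of_pos hm0]
      congr 1
      rw [← hLdef]
      field_simp
    calc Real.exp (-(2 * v₀)) * m ^ (-(2 * vstar)) * m ^ (-(3 * v₀) / M)
        ≤ Real.exp (-(2 * v₀)) * m ^ (-(2 * vstar)) * m ^ (-(2 * v₀) / M) := by
          have hee : -(3 * v₀) / (M:ℝ) ≤ -(2 * v₀) / M := by
            have hpos : (0:ℝ) ≤ v₀ / M := by positivity
            rw [show -(3 * v₀) / (M:ℝ) = -(2 * v₀) / (M:ℝ) - v₀ / M from by ring]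
            linarith
          exact mul_le_mul_of_nonneg_left
            (Real.rpow_le_rpow_of_exponent_le hm1 hee) (by positivity)
      _ = m ^ (-(2 * vstar) + -(2 * v₀)/M + -(2 * v₀)/L) := by
          rw [Real.rpow_add hm0, Real.rpow_add hm0, hEeq]; ring
      _ ≤ m ^ (-(2 * v x)) := Real.rpow_le_rpow_of_exponent_le hm1 hexp
  -- sum lower bound
  have hsum : (n:ℝ) * (Real.exp (-(2 * v₀)) * m ^ (-(2 * vstar)) * m ^ (-(3 * v₀) / M))
      ≤ ∑ l ∈ Finset.Icc 1 M, m ^ (-(2 * v (((l:ℝ) - 1 + d) / M))) := by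
    calc (n:ℝ) * (Real.exp (-(2 * v₀)) * m ^ (-(2 * vstar)) * m ^ (-(3 * v₀) / M))
        = ∑ _l ∈ S, Real.exp (-(2 * v₀)) * m ^ (-(2 * vstar)) * m ^ (-(3 * v₀) / M) := by
          rw [Finset.sum_const, hScard, nsmul_eq_mul]
      _ ≤ ∑ l ∈ S, m ^ (-(2 * v (((l:ℝ) - 1 + d) / M))) := Finset.sum_le_sum hterm
      _ ≤ ∑ l ∈ Finset.Icc 1 M, m ^ (-(2 * v (((l:ℝ) - 1 + d) / M))) :=
          Finset.sum_le_sum_of_subset_of_nonneg hSsub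
            (fun i _ _ => Real.rpow_nonneg hm0.le _)
  rw [ge_iff_le]
  have hfrac : L⁻¹ + (M:ℝ)⁻¹ ≤ 4 * n / M := by
    rw [le_div_iff₀ hM0]
    have : (L⁻¹ + (M:ℝ)⁻¹) * M = (M:ℝ)/L + 1 := by field_simp
    rw [this]
    linarith
  calc Real.exp (-(2 * v₀)) / 4 * m ^ (-(2 * vstar)) * m ^ (-(3 * v₀) / M)
        * (L⁻¹ + (M:ℝ)⁻¹)
      ≤ Real.exp (-(2 * v₀)) / 4 * m ^ (-(2 * vstar)) * m ^ (-(3 * v₀) / M)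
        * (4 * n / M) := by
        exact mul_le_mul_of_nonneg_left hfrac (by positivity)
    _ = (1/M) * ((n:ℝ) * (Real.exp (-(2 * v₀)) * m ^ (-(2 * vstar))
        * m ^ (-(3 * v₀) / M))) := by
        field_simp
    _ ≤ (1/M) * ∑ l ∈ Finset.Icc 1 M, m ^ (-(2 * v (((l:ℝ) - 1 + d) / M))) := by
        exact mul_le_mul_of_nonneg_left hsum (by positivity)
end

section
/- Let S : [0, 1] → ℝ be continuously differentiable with |S′(x)| ≤ s₂ for all x ∈ [0, 1], let ν : ℝ → ℝ be continuously differentiable with |ν′(u)| ≤ ν₀ for all u in the range of S, and set ν_min = min_{x ∈ [0,1]} ν(S(x)). Then for every real m ≥ 1, every d ∈ [0, 1] and every positive integer M: | (1/M) Σ_{l=1}^{M} m^{−2ν(S((l − 1 + d)/M))} − ∫_0^1 m^{−2ν(S(x))} dx | ≤ ν₀·s₂·(ln m)·m^{−2ν_min} / M. -/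
open MeasureTheory intervalIntegral

lemma riemann_step (F : ℝ → ℝ) (L a b c : ℝ) (hab : a ≤ b) (hc : c ∈ Set.Icc a b)
    (hcont : ContinuousOn F (Set.Icc a b)) (hL : 0 ≤ L)
    (hlip : ∀ x ∈ Set.Icc a b, |F x - F c| ≤ L * |x - c|) :
    |(∫ x in a..b, F x) - (b - a) * F c| ≤ L * (b - a)^2 / 2 := by
  obtain ⟨hac, hcb⟩ := hc
  have hint : IntervalIntegrable F volume a b :=
    ContinuousOn.intervalIntegrable (by rwa [Set.uIcc_of_le hab])
  have h1 : (∫ x in a..b, F x) - (b - a) * F c = ∫ x in a..b, (F x - F c) := by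
    rw [intervalIntegral.integral_sub hint intervalIntegrable_const,
      intervalIntegral.integral_const, smul_eq_mul]
  rw [h1]
  set G : ℝ → ℝ := fun x => L * |x - c| with hG
  have hcontG : Continuous G := by
    exact continuous_const.mul (continuous_id.sub continuous_const).abs
  have hintG : IntervalIntegrable G volume a b := hcontG.intervalIntegrable a b
  have h2 : |∫ x in a..b, (F x - F c)| ≤ |∫ x in a..b, G x| := by
    have hae : ∀ᵐ t ∂volume.restrict (Set.uIoc a b), ‖F t - F c‖ ≤ G t := by
      refine (MeasureTheory.ae_restrict_iff' measurableSet_uIoc).2 (Filter.Eventually.of_forall ?_)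
      intro t ht
      rw [Set.uIoc_of_le hab] at ht
      exact hlip t ⟨ht.1.le, ht.2⟩
    simpa using intervalIntegral.norm_integral_le_abs_of_norm_le hae hintG
  refine h2.trans ?_
  have e1 : (∫ x in a..c, G x) = L * (c - a)^2 / 2 := by
    have heq : (∫ x in a..c, G x) = ∫ x in a..c, (L * c - L * x) := by
      apply intervalIntegral.integral_congr
      intro x hx
      rw [Set.uIcc_of_le hac] at hx
      have : |x - c| = c - x := by rw [abs_sub_comm, abs_of_nonneg (by linarith [hx.2])]
      simp only [hG, this]; ring
    rw [heq]
    have hid : IntervalIntegrable (fun x : ℝ => L * x) volume a c :=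
      (continuous_const.mul continuous_id).intervalIntegrable a c
    rw [intervalIntegral.integral_sub intervalIntegrable_const hid,
      intervalIntegral.integral_const_mul L (fun x => x), integral_id]
    simp
    ring
  have e2 : (∫ x in c..b, G x) = L * (b - c)^2 / 2 := by
    have heq : (∫ x in c..b, G x) = ∫ x in c..b, (L * x - L * c) := by
      apply intervalIntegral.integral_congr
      intro x hx
      rw [Set.uIcc_of_le hcb] at hx
      have : |x - c| = x - c := abs_of_nonneg (by linarith [hx.1])
      simp only [hG, this]; ring
    rw [heq]
    have hid : IntervalIntegrable (fun x : ℝ => L * x) volume c b :=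
      (continuous_const.mul continuous_id).intervalIntegrable c b
    rw [intervalIntegral.integral_sub hid intervalIntegrable_const,
      intervalIntegral.integral_const_mul L (fun x => x), integral_id]
    simp
    ring
  have hsplit : (∫ x in a..b, G x) = L * (c - a)^2 / 2 + L * (b - c)^2 / 2 := by
    rw [← intervalIntegral.integral_add_adjacent_intervals
      (hcontG.intervalIntegrable a c) (hcontG.intervalIntegrable c b), e1, e2]
  rw [hsplit, abs_of_nonneg (by positivity)]
  nlinarith [mul_nonneg (mul_nonneg hL (sub_nonneg.2 hac)) (sub_nonneg.2 hcb)]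



/-- Riemann-sum error bound for the pseudo-uniform grid average of `m^{-2ν(S(x))}`:
if `S` is continuously differentiable on `[0,1]` with `|S'| ≤ s₂`, `ν` is continuously
differentiable on the range of `S` with `|ν'| ≤ ν₀`, and
`ν_min = min_{x ∈ [0,1]} ν(S(x))`, then for every real `m ≥ 1`, `d ∈ [0,1]` and
positive integer `M`,
`|(1/M) ∑_{l=1}^M m^{-2ν(S((l-1+d)/M))} - ∫_0^1 m^{-2ν(S(x))} dx|
  ≤ ν₀ s₂ (ln m) m^{-2ν_min} / M`. -/
theorem stmt_16 (S S' ν ν' : ℝ → ℝ) (s₂ ν₀ : ℝ)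
    (hS : ∀ x ∈ Set.Icc (0:ℝ) 1, HasDerivAt S (S' x) x)
    (hS'cont : ContinuousOn S' (Set.Icc (0:ℝ) 1))
    (hS'bd : ∀ x ∈ Set.Icc (0:ℝ) 1, |S' x| ≤ s₂)
    (hν : ∀ u ∈ S '' Set.Icc (0:ℝ) 1, HasDerivAt ν (ν' u) u)
    (hν'cont : ContinuousOn ν' (S '' Set.Icc (0:ℝ) 1))
    (hν'bd : ∀ u ∈ S '' Set.Icc (0:ℝ) 1, |ν' u| ≤ ν₀)
    (νmin : ℝ) (hνmin : IsLeast ((fun x => ν (S x)) '' Set.Icc (0:ℝ) 1) νmin)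
    (m : ℝ) (hm : 1 ≤ m) (d : ℝ) (hd : d ∈ Set.Icc (0:ℝ) 1) (M : ℕ) (hM : 0 < M) :
    |(1 / (M : ℝ)) * ∑ l ∈ Finset.Icc 1 M, m ^ (-(2 * ν (S (((l : ℝ) - 1 + d) / M)))) -
        ∫ x in (0:ℝ)..1, m ^ (-(2 * ν (S x)))| ≤
      ν₀ * s₂ * Real.log m * m ^ (-(2 * νmin)) / M := by
  have hm0 : (0:ℝ) < m := lt_of_lt_of_le one_pos hm
  have hlog : 0 ≤ Real.log m := Real.log_nonneg hm
  have hs₂ : 0 ≤ s₂ := le_trans (abs_nonneg _) (hS'bd 0 ⟨le_refl _, zero_le_one⟩)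
  have hν₀ : 0 ≤ ν₀ := le_trans (abs_nonneg _) (hν'bd (S 0) ⟨0, ⟨le_refl _, zero_le_one⟩, rfl⟩)
  set F : ℝ → ℝ := fun x => m ^ (-(2 * ν (S x))) with hF
  set C : ℝ := ν₀ * s₂ * Real.log m * m ^ (-(2 * νmin)) with hC
  have hC0 : 0 ≤ C := by
    have : (0:ℝ) ≤ m ^ (-(2 * νmin)) := Real.rpow_nonneg hm0.le _
    positivity
  set F' : ℝ → ℝ := fun x =>
    Real.exp (Real.log m * (-(2 * ν (S x)))) * (Real.log m * (-(2 * (ν' (S x) * S' x)))) with hF'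
  have hFexp : ∀ x, F x = Real.exp (Real.log m * (-(2 * ν (S x)))) := fun x =>
    Real.rpow_def_of_pos hm0 _
  have hderiv : ∀ x ∈ Set.Icc (0:ℝ) 1, HasDerivAt F (F' x) x := by
    intro x hx
    have hSx : S x ∈ S '' Set.Icc (0:ℝ) 1 := ⟨x, hx, rfl⟩
    have h1 : HasDerivAt (fun y => ν (S y)) (ν' (S x) * S' x) x :=
      (hν _ hSx).comp x (hS x hx)
    have h2 : HasDerivAt (fun y => Real.log m * (-(2 * ν (S y))))
        (Real.log m * (-(2 * (ν' (S x) * S' x)))) x := by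
      have := ((h1.const_mul (2:ℝ)).neg).const_mul (Real.log m)
      simpa using this
    have h3 := h2.exp
    have : F = fun y => Real.exp (Real.log m * (-(2 * ν (S y)))) := funext hFexp
    rw [this]
    exact h3
  have hbound : ∀ x ∈ Set.Icc (0:ℝ) 1, |F' x| ≤ 2 * C := by
    intro x hx
    have hSx : S x ∈ S '' Set.Icc (0:ℝ) 1 := ⟨x, hx, rfl⟩
    have hmono : νmin ≤ ν (S x) := hνmin.2 ⟨x, hx, rfl⟩
    have e1 : Real.exp (Real.log m * (-(2 * ν (S x)))) ≤ m ^ (-(2 * νmin)) := by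
      rw [← Real.rpow_def_of_pos hm0]
      exact Real.rpow_le_rpow_of_exponent_le hm (by linarith)
    have habs : |F' x| = Real.exp (Real.log m * (-(2 * ν (S x)))) *
        (Real.log m * (2 * (|ν' (S x)| * |S' x|))) := by
      rw [hF']
      rw [abs_mul, abs_of_nonneg (Real.exp_pos _).le, abs_mul, abs_neg, abs_mul, abs_mul,
        abs_of_nonneg hlog, abs_two]
    rw [habs]
    have h2C : 2 * C = m ^ (-(2 * νmin)) * (Real.log m * (2 * (ν₀ * s₂))) := by
      rw [hC]; ring
    rw [h2C]
    have hexp0 : (0:ℝ) ≤ Real.exp (Real.log m * (-(2 * ν (S x)))) := (Real.exp_pos _).le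
    gcongr <;> first
      | exact hν'bd _ hSx
      | exact hS'bd _ hx
      | exact mul_nonneg hlog (by positivity)
      | positivity
  have hFcont : ContinuousOn F (Set.Icc (0:ℝ) 1) :=
    fun x hx => (hderiv x hx).continuousAt.continuousWithinAt
  have hlipG : ∀ x ∈ Set.Icc (0:ℝ) 1, ∀ y ∈ Set.Icc (0:ℝ) 1,
      |F x - F y| ≤ (2 * C) * |x - y| := by
    intro x hx y hy
    have := (convex_Icc (0:ℝ) 1).norm_image_sub_le_of_norm_hasDerivWithin_le
      (fun z hz => (hderiv z hz).hasDerivWithinAt)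
      (fun z hz => by simpa [Real.norm_eq_abs] using hbound z hz) hy hx
    simpa [Real.norm_eq_abs] using this
  -- grid
  have hMR : (0:ℝ) < M := Nat.cast_pos.mpr hM
  set a : ℕ → ℝ := fun k => (k : ℝ) / M with ha
  have hsub : ∀ k, k < M → Set.Icc (a k) (a (k+1)) ⊆ Set.Icc (0:ℝ) 1 := by
    intro k hk
    apply Set.Icc_subset_Icc
    · exact div_nonneg (Nat.cast_nonneg k) hMR.le
    · rw [div_le_one hMR]
      exact_mod_cast Nat.cast_le.mpr hk
  have hstep : ∀ k, a (k+1) - a k = 1 / M := by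
    intro k; rw [ha]; push_cast; field_simp; ring
  have hle : ∀ k, a k ≤ a (k+1) := by
    intro k
    have := hstep k
    have : (0:ℝ) < 1 / M := by positivity
    nlinarith [hstep k]
  have hint : ∀ k < M, IntervalIntegrable F volume (a k) (a (k+1)) := by
    intro k hk
    apply ContinuousOn.intervalIntegrable
    rw [Set.uIcc_of_le (hle k)]
    exact hFcont.mono (hsub k hk)
  have hsplitInt : (∫ x in (0:ℝ)..1, F x) = ∑ k ∈ Finset.range M, ∫ x in (a k)..(a (k+1)), F x := by
    rw [intervalIntegral.sum_integral_adjacent_intervals hint]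
    norm_num [ha, div_self hMR.ne']
  -- reindex the sum
  have hsum : ∑ l ∈ Finset.Icc 1 M, F (((l : ℝ) - 1 + d) / M)
      = ∑ k ∈ Finset.range M, F (((k : ℝ) + d) / M) := by
    rw [← Finset.Ico_add_one_right_eq_Icc, Finset.sum_Ico_eq_sum_range]
    apply Finset.sum_congr (by norm_num)
    intro k _
    congr 2
    push_cast
    ring
  have key : (1 / (M : ℝ)) * ∑ l ∈ Finset.Icc 1 M, F (((l : ℝ) - 1 + d) / M)
      - ∫ x in (0:ℝ)..1, F x
      = ∑ k ∈ Finset.range M,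
          ((1 / (M : ℝ)) * F (((k : ℝ) + d) / M) - ∫ x in (a k)..(a (k+1)), F x) := by
    rw [hsum, hsplitInt, Finset.mul_sum, Finset.sum_sub_distrib]
  rw [show |(1 / (M : ℝ)) * ∑ l ∈ Finset.Icc 1 M, m ^ (-(2 * ν (S (((l : ℝ) - 1 + d) / M)))) -
        ∫ x in (0:ℝ)..1, m ^ (-(2 * ν (S x)))| =
      |∑ k ∈ Finset.range M,
          ((1 / (M : ℝ)) * F (((k : ℝ) + d) / M) - ∫ x in (a k)..(a (k+1)), F x)| from by rw [← key]]
  have hterm : ∀ k ∈ Finset.range M,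
      |(1 / (M : ℝ)) * F (((k : ℝ) + d) / M) - ∫ x in (a k)..(a (k+1)), F x| ≤ C / M^2 := by
    intro k hk
    rw [Finset.mem_range] at hk
    have hcmem : ((k : ℝ) + d) / M ∈ Set.Icc (a k) (a (k+1)) := by
      simp only [ha, Set.mem_Icc]
      push_cast
      constructor <;> gcongr <;> linarith [hd.1, hd.2]
    have hsubk := hsub k hk
    have := riemann_step F (2 * C) (a k) (a (k+1)) (((k : ℝ) + d) / M) (hle k)
      hcmem (hFcont.mono hsubk) (by linarith)
      (fun x hx => hlipG x (hsubk hx) _ (hsubk hcmem))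
    rw [hstep k] at this
    rw [abs_sub_comm]
    calc |(∫ x in (a k)..(a (k+1)), F x) - (1 / (M:ℝ)) * F (((k : ℝ) + d) / M)|
        = |(∫ x in (a k)..(a (k+1)), F x) - (1 / (M:ℝ)) * F (((k : ℝ) + d) / M)| := rfl
      _ ≤ 2 * C * (1 / (M:ℝ))^2 / 2 := this
      _ = C / M^2 := by field_simp
  calc |∑ k ∈ Finset.range M,
          ((1 / (M : ℝ)) * F (((k : ℝ) + d) / M) - ∫ x in (a k)..(a (k+1)), F x)|
      ≤ ∑ k ∈ Finset.range M,
          |(1 / (M : ℝ)) * F (((k : ℝ) + d) / M) - ∫ x in (a k)..(a (k+1)), F x| :=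
        Finset.abs_sum_le_sum_abs _ _
    _ ≤ ∑ _k ∈ Finset.range M, C / M^2 := Finset.sum_le_sum hterm
    _ = M * (C / M^2) := by rw [Finset.sum_const, Finset.card_range, nsmul_eq_mul]
    _ = C / M := by field_simp
end
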